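/- arXiv:2205.08235 — 4 statements merged into one kernel-verified Lean document; each statement's English description precedes it below -/
import Mathlib

section
/- Let G be a connected graph with a bridge e = {v1, v2} whose removal yields components G1 (containing v1) and G2 (containing v2). If i ∈ V(G1) and j ∈ V(G2), then the number of 2-tree spanning forests of G separating i and j equals τ_{G1}·f^{G2}_{v2,j} + τ_{G2}·f^{G1}_{i,v1} + τ_{G1}·τ_{G2}. -/
open SimpleGraph Finset Matrix
open scoped Classical

noncomputable section

/-- Number of spanning trees of `G`. -/
noncomputable def tau {V : Type*} [Fintype V] (G : SimpleGraph V) : ℕ :=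
  Set.ncard {H : SimpleGraph V | H ≤ G ∧ H.Connected ∧ H.IsAcyclic}

/-- Number of 2-tree spanning forests of `G` separating `i` and `j`. -/
noncomputable def twoForest {V : Type*} [Fintype V] (G : SimpleGraph V) (i j : V) : ℕ :=
  Set.ncard {H : SimpleGraph V | H ≤ G ∧ H.IsAcyclic ∧ ¬ H.Reachable i j ∧
    ∀ v, H.Reachable i v ∨ H.Reachable j v}

/-- The four Penrose equations: `B` is the Moore–Penrose inverse of `A`. -/
def IsMoorePenroseInv {n : Type*} [Fintype n] (A B : Matrix n n ℝ) : Prop :=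
  A * B * A = A ∧ B * A * B = B ∧ (A * B)ᵀ = A * B ∧ (B * A)ᵀ = B * A

/-- Laplacian matrix of a graph. -/
noncomputable def lap {V : Type*} [Fintype V] [DecidableEq V] (G : SimpleGraph V) :
    Matrix V V ℝ :=
  fun i j => if i = j then (G.degree i : ℝ) else if G.Adj i j then -1 else 0

/-- Effective resistance computed from a (Moore–Penrose inverse) matrix `Ld`. -/
noncomputable def effRes {V : Type*} [Fintype V] [DecidableEq V] (Ld : Matrix V V ℝ)
    (i j : V) : ℝ :=
  (Pi.single i 1 - Pi.single j 1) ⬝ᵥ Ld.mulVec (Pi.single i 1 - Pi.single j 1)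

/-- Transition matrix of the simple random walk on `G`. -/
noncomputable def transP {V : Type*} [Fintype V] (G : SimpleGraph V) : Matrix V V ℝ :=
  fun i j => if G.Adj i j then (1 : ℝ) / (G.degree i) else 0

/-- Stationary distribution of the simple random walk. -/
noncomputable def statPi {V : Type*} [Fintype V] (G : SimpleGraph V) (i : V) : ℝ :=
  (G.degree i : ℝ) / (2 * G.edgeFinset.card)

/-- `M` is the matrix of mean first passage times of the random walk on `G`. -/
def IsMFPT {V : Type*} [Fintype V] (G : SimpleGraph V) (M : V → V → ℝ) : Prop :=
  (∀ j, M j j = 0) ∧ ∀ i j, i ≠ j → M i j = 1 + ∑ k, transP G i k * M k j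

/-- Kemeny's constant. -/
noncomputable def kemeny {V : Type*} [Fintype V] (G : SimpleGraph V) (M : V → V → ℝ) : ℝ :=
  ∑ i, ∑ j ∈ Finset.univ.filter (· ≠ i), statPi G i * M i j * statPi G j

/-- Accessibility index of vertex `v`. -/
noncomputable def acc {V : Type*} [Fintype V] (G : SimpleGraph V) (M : V → V → ℝ) (v : V) : ℝ :=
  ∑ i ∈ Finset.univ.filter (· ≠ v), statPi G i * M i v

/-- Joining `G1` and `G2` by the bridge `v1 ∼ v2`. -/
def chainTwo {V1 V2 : Type*} (G1 : SimpleGraph V1) (G2 : SimpleGraph V2)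
    (v1 : V1) (v2 : V2) : SimpleGraph (V1 ⊕ V2) where
  Adj p q :=
    match p, q with
    | Sum.inl a, Sum.inl b => G1.Adj a b
    | Sum.inr a, Sum.inr b => G2.Adj a b
    | Sum.inl a, Sum.inr b => a = v1 ∧ b = v2
    | Sum.inr a, Sum.inl b => b = v1 ∧ a = v2
  symm := by
    constructor
    rintro (a | a) (b | b) h
    · exact G1.adj_symm h
    · exact ⟨h.1, h.2⟩
    · exact ⟨h.1, h.2⟩
    · exact G2.adj_symm h
  loopless := by
    constructor
    rintro (a | a) h
    · exact G1.irrefl h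
    · exact G2.irrefl h

end

namespace BridgeAux

variable {V1 V2 : Type*}

/-- Joining subgraphs `H1` and `H2`, with the bridge edge present iff `b`. -/
def glue (H1 : SimpleGraph V1) (H2 : SimpleGraph V2) (v1 : V1) (v2 : V2) (b : Prop) :
    SimpleGraph (V1 ⊕ V2) where
  Adj p q := match p, q with
    | Sum.inl a, Sum.inl c => H1.Adj a c
    | Sum.inr a, Sum.inr c => H2.Adj a c
    | Sum.inl a, Sum.inr c => b ∧ a = v1 ∧ c = v2
    | Sum.inr a, Sum.inl c => b ∧ c = v1 ∧ a = v2
  symm := by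
    constructor
    rintro (a | a) (c | c) h
    · exact H1.adj_symm h
    · exact h
    · exact h
    · exact H2.adj_symm h
  loopless := by
    constructor
    rintro (a | a) h
    · exact H1.irrefl h
    · exact H2.irrefl h

variable {H1 : SimpleGraph V1} {H2 : SimpleGraph V2} {v1 : V1} {v2 : V2} {b : Prop}

@[simp] lemma glue_adj_inl_inl {a c : V1} :
    (glue H1 H2 v1 v2 b).Adj (Sum.inl a) (Sum.inl c) ↔ H1.Adj a c := Iff.rfl

@[simp] lemma glue_adj_inr_inr {a c : V2} :
    (glue H1 H2 v1 v2 b).Adj (Sum.inr a) (Sum.inr c) ↔ H2.Adj a c := Iff.rfl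

@[simp] lemma glue_adj_inl_inr {a : V1} {c : V2} :
    (glue H1 H2 v1 v2 b).Adj (Sum.inl a) (Sum.inr c) ↔ b ∧ a = v1 ∧ c = v2 := Iff.rfl

@[simp] lemma glue_adj_inr_inl {a : V2} {c : V1} :
    (glue H1 H2 v1 v2 b).Adj (Sum.inr a) (Sum.inl c) ↔ b ∧ c = v1 ∧ a = v2 := Iff.rfl

lemma comap_inl_glue : SimpleGraph.comap Sum.inl (glue H1 H2 v1 v2 b) = H1 := by
  ext a c; rfl

lemma comap_inr_glue : SimpleGraph.comap Sum.inr (glue H1 H2 v1 v2 b) = H2 := by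
  ext a c; rfl

lemma glue_congr {b' : Prop} (h : b ↔ b') :
    glue H1 H2 v1 v2 b = glue H1 H2 v1 v2 b' := by
  have : b = b' := propext h
  rw [this]

lemma glue_le_chainTwo {G1 : SimpleGraph V1} {G2 : SimpleGraph V2}
    (hle1 : H1 ≤ G1) (hle2 : H2 ≤ G2) :
    glue H1 H2 v1 v2 b ≤ chainTwo G1 G2 v1 v2 := by
  rintro (a | a) (c | c) h
  · exact hle1 h
  · exact ⟨h.2.1, h.2.2⟩
  · exact ⟨h.2.1, h.2.2⟩
  · exact hle2 h

lemma eq_glue {G1 : SimpleGraph V1} {G2 : SimpleGraph V2}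
    {H : SimpleGraph (V1 ⊕ V2)} (hle : H ≤ chainTwo G1 G2 v1 v2) :
    H = glue (SimpleGraph.comap Sum.inl H) (SimpleGraph.comap Sum.inr H) v1 v2
      (H.Adj (Sum.inl v1) (Sum.inr v2)) := by
  ext x y
  cases x with
  | inl a => cases y with
    | inl c => exact Iff.rfl
    | inr c =>
      constructor
      · intro h
        obtain ⟨rfl, rfl⟩ : a = v1 ∧ c = v2 := hle h
        exact ⟨h, rfl, rfl⟩
      · rintro ⟨h, rfl, rfl⟩; exact h
  | inr a => cases y with
    | inl c =>
      constructor
      · intro h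
        obtain ⟨rfl, rfl⟩ : c = v1 ∧ a = v2 := hle h
        exact ⟨h.symm, rfl, rfl⟩
      · rintro ⟨h, rfl, rfl⟩; exact h.symm
    | inr c => exact Iff.rfl

/-- Homomorphism from `H1` into the glued graph. -/
def homInl : H1 →g glue H1 H2 v1 v2 b := ⟨Sum.inl, fun h => h⟩

def homInr : H2 →g glue H1 H2 v1 v2 b := ⟨Sum.inr, fun h => h⟩

lemma reach_of_walk_inl {p q : V1 ⊕ V2}
    (w : (glue H1 H2 v1 v2 b).Walk p q) :
    H1.Reachable (Sum.elim id (fun _ => v1) p) (Sum.elim id (fun _ => v1) q) := by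
  induction w with
  | nil => exact Reachable.refl _
  | @cons p r _ h _ ih =>
    cases p with
    | inl a => cases r with
      | inl a' => exact (Adj.reachable (glue_adj_inl_inl.mp h)).trans ih
      | inr a' => obtain ⟨_, rfl, _⟩ := h; exact ih
    | inr a => cases r with
      | inl a' => obtain ⟨_, rfl, _⟩ := h; exact ih
      | inr a' => exact ih

lemma reach_of_walk_inr {p q : V1 ⊕ V2}
    (w : (glue H1 H2 v1 v2 b).Walk p q) :
    H2.Reachable (Sum.elim (fun _ => v2) id p) (Sum.elim (fun _ => v2) id q) := by
  induction w with
  | nil => exact Reachable.refl _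
  | @cons p r _ h _ ih =>
    cases p with
    | inl a => cases r with
      | inl a' => exact ih
      | inr a' => obtain ⟨_, _, rfl⟩ := h; exact ih
    | inr a => cases r with
      | inl a' => obtain ⟨_, _, rfl⟩ := h; exact ih
      | inr a' => exact (Adj.reachable (glue_adj_inr_inr.mp h)).trans ih

lemma cross_of_walk {p q : V1 ⊕ V2}
    (w : (glue H1 H2 v1 v2 b).Walk p q) :
    ∀ a c, p = Sum.inl a → q = Sum.inr c → b ∧ H1.Reachable a v1 := by
  induction w with
  | nil => rintro a c rfl ⟨⟩
  | @cons p r _ h _ ih =>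
    rintro a c rfl rfl
    cases r with
    | inl a' =>
      obtain ⟨hb, hr⟩ := ih a' c rfl rfl
      exact ⟨hb, (Adj.reachable (glue_adj_inl_inl.mp h)).trans hr⟩
    | inr a' =>
      obtain ⟨hb, rfl, _⟩ := h
      exact ⟨hb, Reachable.refl _⟩

@[simp] lemma glue_reachable_inl_inl {a c : V1} :
    (glue H1 H2 v1 v2 b).Reachable (Sum.inl a) (Sum.inl c) ↔ H1.Reachable a c := by
  constructor
  · rintro ⟨w⟩; exact reach_of_walk_inl w
  · exact fun h => h.map (homInl)

@[simp] lemma glue_reachable_inr_inr {a c : V2} :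
    (glue H1 H2 v1 v2 b).Reachable (Sum.inr a) (Sum.inr c) ↔ H2.Reachable a c := by
  constructor
  · rintro ⟨w⟩; exact reach_of_walk_inr w
  · exact fun h => h.map (homInr)

@[simp] lemma glue_reachable_inl_inr {a : V1} {c : V2} :
    (glue H1 H2 v1 v2 b).Reachable (Sum.inl a) (Sum.inr c) ↔
      b ∧ H1.Reachable a v1 ∧ H2.Reachable v2 c := by
  constructor
  · rintro ⟨w⟩
    obtain ⟨hb, hr1⟩ := cross_of_walk w a c rfl rfl
    exact ⟨hb, hr1, reach_of_walk_inr w⟩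
  · rintro ⟨hb, h1, h2⟩
    have e : (glue H1 H2 v1 v2 b).Adj (Sum.inl v1) (Sum.inr v2) := ⟨hb, rfl, rfl⟩
    exact (h1.map (homInl)).trans ((e.reachable).trans (h2.map (homInr)))

lemma del_inl {a c : V1} :
    glue H1 H2 v1 v2 b \ fromEdgeSet {s(Sum.inl a, Sum.inl c)} =
      glue (H1 \ fromEdgeSet {s(a, c)}) H2 v1 v2 b := by
  ext x y
  cases x with
  | inl u => cases y with
    | inl w => simp [Sym2.eq_iff]
    | inr w => simp
  | inr u => cases y with
    | inl w => simp
    | inr w => simp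

lemma del_inr {a c : V2} :
    glue H1 H2 v1 v2 b \ fromEdgeSet {s(Sum.inr a, Sum.inr c)} =
      glue H1 (H2 \ fromEdgeSet {s(a, c)}) v1 v2 b := by
  ext x y
  cases x with
  | inl u => cases y with
    | inl w => simp
    | inr w => simp
  | inr u => cases y with
    | inl w => simp
    | inr w => simp [Sym2.eq_iff]

lemma del_cross :
    glue H1 H2 v1 v2 b \ fromEdgeSet {s(Sum.inl v1, Sum.inr v2)} =
      glue H1 H2 v1 v2 False := by
  ext x y
  cases x with
  | inl u => cases y with
    | inl w => simp
    | inr w => simp [Sym2.eq_iff]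
  | inr u => cases y with
    | inl w => simp [Sym2.eq_iff]; tauto
    | inr w => simp

lemma glue_isAcyclic :
    (glue H1 H2 v1 v2 b).IsAcyclic ↔ H1.IsAcyclic ∧ H2.IsAcyclic := by
  constructor
  · intro h
    constructor
    · intro a w hw
      exact h (w.map homInl) (hw.map Sum.inl_injective)
    · intro a w hw
      exact h (w.map homInr) (hw.map Sum.inr_injective)
  · rintro ⟨hA1, hA2⟩
    rw [isAcyclic_iff_forall_adj_isBridge]
    rintro (x | x) (y | y) hadj
    · rw [isBridge_iff]
      rw [deleteEdges, del_inl, glue_reachable_inl_inl]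
      exact isBridge_iff.mp (isAcyclic_iff_forall_adj_isBridge.mp hA1 hadj)
    · obtain ⟨hb, rfl, rfl⟩ := hadj
      rw [isBridge_iff]
      rw [deleteEdges, del_cross, glue_reachable_inl_inr]
      simp
    · obtain ⟨hb, rfl, rfl⟩ := hadj
      rw [Sym2.eq_swap, isBridge_iff]
      rw [deleteEdges, del_cross]
      intro hr
      have := glue_reachable_inl_inr.mp hr
      simp at this
    · rw [isBridge_iff]
      rw [deleteEdges, del_inr, glue_reachable_inr_inr]
      exact isBridge_iff.mp (isAcyclic_iff_forall_adj_isBridge.mp hA2 hadj)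


lemma glue_injective (v1 : V1) (v2 : V2) (b : Prop) :
    Function.Injective
      (fun p : SimpleGraph V1 × SimpleGraph V2 => glue p.1 p.2 v1 v2 b) := by
  intro p q h
  have h1 := congrArg (SimpleGraph.comap Sum.inl) h
  have h2 := congrArg (SimpleGraph.comap Sum.inr) h
  rw [comap_inl_glue, comap_inl_glue] at h1
  rw [comap_inr_glue, comap_inr_glue] at h2
  exact Prod.ext h1 h2

lemma ncard_prod {α β : Type*} (s : Set α) (t : Set β) :
    (s ×ˢ t).ncard = s.ncard * t.ncard := by
  rw [← Nat.card_coe_set_eq, ← Nat.card_coe_set_eq, ← Nat.card_coe_set_eq,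
    Nat.card_congr (Equiv.Set.prod s t), Nat.card_prod]

lemma S_eq (G1 : SimpleGraph V1) (G2 : SimpleGraph V2) (v1 : V1) (v2 : V2) (i : V1) (j : V2) :
    {H : SimpleGraph (V1 ⊕ V2) | H ≤ chainTwo G1 G2 v1 v2 ∧ H.IsAcyclic ∧
        ¬ H.Reachable (Sum.inl i) (Sum.inr j) ∧
        ∀ v, H.Reachable (Sum.inl i) v ∨ H.Reachable (Sum.inr j) v} =
      (fun p : SimpleGraph V1 × SimpleGraph V2 => glue p.1 p.2 v1 v2 True) ''
          ({H | H ≤ G1 ∧ H.Connected ∧ H.IsAcyclic} ×ˢ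
           {H | H ≤ G2 ∧ H.IsAcyclic ∧ ¬ H.Reachable v2 j ∧
              ∀ v, H.Reachable v2 v ∨ H.Reachable j v}) ∪
        ((fun p : SimpleGraph V1 × SimpleGraph V2 => glue p.1 p.2 v1 v2 True) ''
          ({H | H ≤ G1 ∧ H.IsAcyclic ∧ ¬ H.Reachable i v1 ∧
              ∀ v, H.Reachable i v ∨ H.Reachable v1 v} ×ˢ
           {H | H ≤ G2 ∧ H.Connected ∧ H.IsAcyclic}) ∪
         (fun p : SimpleGraph V1 × SimpleGraph V2 => glue p.1 p.2 v1 v2 False) ''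
          ({H | H ≤ G1 ∧ H.Connected ∧ H.IsAcyclic} ×ˢ
           {H | H ≤ G2 ∧ H.Connected ∧ H.IsAcyclic})) := by
  ext H
  simp only [Set.mem_setOf_eq, Set.mem_union, Set.mem_image, Set.mem_prod, Prod.exists]
  constructor
  · rintro ⟨hle, hac, hnr, hcov⟩
    have hle1 : SimpleGraph.comap Sum.inl H ≤ G1 := by intro a c h; exact hle h
    have hle2 : SimpleGraph.comap Sum.inr H ≤ G2 := by intro a c h; exact hle h
    have hg := eq_glue (v1 := v1) (v2 := v2) hle
    rw [hg] at hac hnr hcov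
    obtain ⟨hac1, hac2⟩ := glue_isAcyclic.mp hac
    rw [glue_reachable_inl_inr] at hnr
    have hcovL : ∀ a : V1, (SimpleGraph.comap Sum.inl H).Reachable i a ∨
        (H.Adj (Sum.inl v1) (Sum.inr v2) ∧ (SimpleGraph.comap Sum.inl H).Reachable a v1 ∧
          (SimpleGraph.comap Sum.inr H).Reachable v2 j) := by
      intro a
      rcases hcov (Sum.inl a) with h | h
      · exact Or.inl (glue_reachable_inl_inl.mp h)
      · exact Or.inr (glue_reachable_inl_inr.mp h.symm)
    have hcovR : ∀ c : V2,
        (H.Adj (Sum.inl v1) (Sum.inr v2) ∧ (SimpleGraph.comap Sum.inl H).Reachable i v1 ∧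
          (SimpleGraph.comap Sum.inr H).Reachable v2 c) ∨
        (SimpleGraph.comap Sum.inr H).Reachable j c := by
      intro c
      rcases hcov (Sum.inr c) with h | h
      · exact Or.inl (glue_reachable_inl_inr.mp h)
      · exact Or.inr (glue_reachable_inr_inr.mp h)
    by_cases hbb : H.Adj (Sum.inl v1) (Sum.inr v2)
    · by_cases hiv : (SimpleGraph.comap Sum.inl H).Reachable i v1
      · have hnd : ¬ (SimpleGraph.comap Sum.inr H).Reachable v2 j :=
          fun h => hnr ⟨hbb, hiv, h⟩
        refine Or.inl ⟨SimpleGraph.comap Sum.inl H, SimpleGraph.comap Sum.inr H,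
          ⟨⟨hle1, (connected_iff _).mpr ⟨fun a c => ?_, ⟨i⟩⟩, hac1⟩,
           hle2, hac2, hnd, fun c => (hcovR c).imp (fun h => h.2.2) id⟩, ?_⟩
        · exact ((hcovL a).resolve_right (fun h => hnd h.2.2)).symm.trans
            ((hcovL c).resolve_right (fun h => hnd h.2.2))
        · conv_rhs => rw [hg]
          exact glue_congr (iff_of_true trivial hbb)
      · refine Or.inr (Or.inl ⟨SimpleGraph.comap Sum.inl H, SimpleGraph.comap Sum.inr H,
          ⟨⟨hle1, hac1, hiv, fun a => (hcovL a).imp id (fun h => h.2.1.symm)⟩,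
           hle2, (connected_iff _).mpr ⟨fun a c => ?_, ⟨j⟩⟩, hac2⟩, ?_⟩)
        · exact ((hcovR a).resolve_left (fun h => hiv h.2.1)).symm.trans
            ((hcovR c).resolve_left (fun h => hiv h.2.1))
        · conv_rhs => rw [hg]
          exact glue_congr (iff_of_true trivial hbb)
    · refine Or.inr (Or.inr ⟨SimpleGraph.comap Sum.inl H, SimpleGraph.comap Sum.inr H,
        ⟨⟨hle1, (connected_iff _).mpr ⟨fun a c => ?_, ⟨i⟩⟩, hac1⟩,
         hle2, (connected_iff _).mpr ⟨fun a c => ?_, ⟨j⟩⟩, hac2⟩, ?_⟩)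
      · exact ((hcovL a).resolve_right (fun h => hbb h.1)).symm.trans
          ((hcovL c).resolve_right (fun h => hbb h.1))
      · exact ((hcovR a).resolve_left (fun h => hbb h.1)).symm.trans
          ((hcovR c).resolve_left (fun h => hbb h.1))
      · conv_rhs => rw [hg]
        exact glue_congr (iff_of_false id hbb)
  · rintro (⟨t1, f2, ⟨⟨hle1, hc1, ha1⟩, hle2, ha2, hnr2, hcov2⟩, rfl⟩ |
      ⟨f1, t2, ⟨⟨hle1, ha1, hnr1, hcov1⟩, hle2, hc2, ha2⟩, rfl⟩ |
      ⟨t1, t2, ⟨⟨hle1, hc1, ha1⟩, hle2, hc2, ha2⟩, rfl⟩)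
    · refine ⟨glue_le_chainTwo hle1 hle2, glue_isAcyclic.mpr ⟨ha1, ha2⟩, ?_, ?_⟩
      · rw [glue_reachable_inl_inr]
        rintro ⟨-, -, h⟩
        exact hnr2 h
      · rintro (a | c)
        · exact Or.inl (glue_reachable_inl_inl.mpr (hc1.preconnected i a))
        · rcases hcov2 c with h | h
          · exact Or.inl (glue_reachable_inl_inr.mpr ⟨trivial, hc1.preconnected i v1, h⟩)
          · exact Or.inr (glue_reachable_inr_inr.mpr h)
    · refine ⟨glue_le_chainTwo hle1 hle2, glue_isAcyclic.mpr ⟨ha1, ha2⟩, ?_, ?_⟩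
      · rw [glue_reachable_inl_inr]
        rintro ⟨-, h, -⟩
        exact hnr1 h
      · rintro (a | c)
        · rcases hcov1 a with h | h
          · exact Or.inl (glue_reachable_inl_inl.mpr h)
          · exact Or.inr
              ((glue_reachable_inl_inr.mpr ⟨trivial, h.symm, hc2.preconnected v2 j⟩).symm)
        · exact Or.inr (glue_reachable_inr_inr.mpr (hc2.preconnected j c))
    · refine ⟨glue_le_chainTwo hle1 hle2, glue_isAcyclic.mpr ⟨ha1, ha2⟩, ?_, ?_⟩
      · rw [glue_reachable_inl_inr]
        rintro ⟨h, -, -⟩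
        exact h
      · rintro (a | c)
        · exact Or.inl (glue_reachable_inl_inl.mpr (hc1.preconnected i a))
        · exact Or.inr (glue_reachable_inr_inr.mpr (hc2.preconnected j c))

end BridgeAux

/-- if `i ∈ V(G1)` and `j ∈ V(G2)`, then
`f^G_{i,j} = τ_{G1}·f^{G2}_{v2,j} + τ_{G2}·f^{G1}_{i,v1} + τ_{G1}·τ_{G2}`. -/
theorem twoForest_chainTwo_cross {V1 V2 : Type*} [Fintype V1] [Fintype V2]
    (G1 : SimpleGraph V1) (G2 : SimpleGraph V2) (v1 : V1) (v2 : V2)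
    (h1 : G1.Connected) (h2 : G2.Connected) (i : V1) (j : V2) :
    twoForest (chainTwo G1 G2 v1 v2) (Sum.inl i) (Sum.inr j) =
      tau G1 * twoForest G2 v2 j + tau G2 * twoForest G1 i v1 + tau G1 * tau G2 := by
  classical
  have dAB : Disjoint
      ((fun p : SimpleGraph V1 × SimpleGraph V2 => BridgeAux.glue p.1 p.2 v1 v2 True) ''
        ({H | H ≤ G1 ∧ H.Connected ∧ H.IsAcyclic} ×ˢ
         {H | H ≤ G2 ∧ H.IsAcyclic ∧ ¬ H.Reachable v2 j ∧
            ∀ v, H.Reachable v2 v ∨ H.Reachable j v}))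
      ((fun p : SimpleGraph V1 × SimpleGraph V2 => BridgeAux.glue p.1 p.2 v1 v2 True) ''
        ({H | H ≤ G1 ∧ H.IsAcyclic ∧ ¬ H.Reachable i v1 ∧
            ∀ v, H.Reachable i v ∨ H.Reachable v1 v} ×ˢ
         {H | H ≤ G2 ∧ H.Connected ∧ H.IsAcyclic})) := by
    refine Set.disjoint_image_of_injective (BridgeAux.glue_injective v1 v2 True) ?_
    rw [Set.disjoint_left]
    rintro ⟨p1, p2⟩ hp hq
    exact hq.1.2.2.1 (hp.1.2.1.preconnected i v1)
  have dAC : Disjoint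
      ((fun p : SimpleGraph V1 × SimpleGraph V2 => BridgeAux.glue p.1 p.2 v1 v2 True) ''
        ({H | H ≤ G1 ∧ H.Connected ∧ H.IsAcyclic} ×ˢ
         {H | H ≤ G2 ∧ H.IsAcyclic ∧ ¬ H.Reachable v2 j ∧
            ∀ v, H.Reachable v2 v ∨ H.Reachable j v}))
      ((fun p : SimpleGraph V1 × SimpleGraph V2 => BridgeAux.glue p.1 p.2 v1 v2 False) ''
        ({H | H ≤ G1 ∧ H.Connected ∧ H.IsAcyclic} ×ˢ
         {H | H ≤ G2 ∧ H.Connected ∧ H.IsAcyclic})) := by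
    refine Set.disjoint_image_image ?_
    intro p _ q _ hne
    have hA : (BridgeAux.glue p.1 p.2 v1 v2 True).Adj (Sum.inl v1) (Sum.inr v2) :=
      ⟨trivial, rfl, rfl⟩
    rw [hne] at hA
    exact hA.1
  have dBC : Disjoint
      ((fun p : SimpleGraph V1 × SimpleGraph V2 => BridgeAux.glue p.1 p.2 v1 v2 True) ''
        ({H | H ≤ G1 ∧ H.IsAcyclic ∧ ¬ H.Reachable i v1 ∧
            ∀ v, H.Reachable i v ∨ H.Reachable v1 v} ×ˢ
         {H | H ≤ G2 ∧ H.Connected ∧ H.IsAcyclic}))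
      ((fun p : SimpleGraph V1 × SimpleGraph V2 => BridgeAux.glue p.1 p.2 v1 v2 False) ''
        ({H | H ≤ G1 ∧ H.Connected ∧ H.IsAcyclic} ×ˢ
         {H | H ≤ G2 ∧ H.Connected ∧ H.IsAcyclic})) := by
    refine Set.disjoint_image_image ?_
    intro p _ q _ hne
    have hA : (BridgeAux.glue p.1 p.2 v1 v2 True).Adj (Sum.inl v1) (Sum.inr v2) :=
      ⟨trivial, rfl, rfl⟩
    rw [hne] at hA
    exact hA.1
  unfold twoForest tau
  rw [BridgeAux.S_eq G1 G2 v1 v2 i j,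
    Set.ncard_union_eq (Set.disjoint_union_right.mpr ⟨dAB, dAC⟩) (Set.toFinite _)
      (Set.toFinite _),
    Set.ncard_union_eq dBC (Set.toFinite _) (Set.toFinite _),
    Set.ncard_image_of_injOn ((BridgeAux.glue_injective v1 v2 True).injOn),
    Set.ncard_image_of_injOn ((BridgeAux.glue_injective v1 v2 True).injOn),
    Set.ncard_image_of_injOn ((BridgeAux.glue_injective v1 v2 False).injOn),
    BridgeAux.ncard_prod, BridgeAux.ncard_prod, BridgeAux.ncard_prod]
  ring
end

section
/- For a simple random walk on a connected graph G with m edges, and any vertex v, the moment μ_G(v) := d_G^T R_G e_v satisfies μ_G(v) = α_G(v) + κ(G), where α_G(v) = Σ_{i ≠ v} π_i m_{i,v} is the accessibility index of v and κ(G) = Σ_{i} Σ_{j≠i} π_i m_{i,j} π_j is Kemeny's constant. -/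
open SimpleGraph Finset Matrix
open scoped Classical

/-- the moment `μ_G(v) = d_Gᵀ R_G e_v` satisfies
`μ_G(v) = α_G(v) + κ(G)`. -/
theorem moment_eq_acc_add_kemeny {V : Type*} [Fintype V] [DecidableEq V]
    (G : SimpleGraph V) (hG : G.Connected) (M : V → V → ℝ) (hM : IsMFPT G M)
    (Ld : Matrix V V ℝ) (hLd : IsMoorePenroseInv (lap G) Ld) (v : V) :
    ∑ i, (G.degree i : ℝ) * effRes Ld i v = acc G M v + kemeny G M := by
  rcases subsingleton_or_nontrivial V with hV | hV
  · -- trivial case: one vertex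
    have hv : ∀ i : V, i = v := fun i => Subsingleton.elim i v
    have h1 : ∑ i, (G.degree i : ℝ) * effRes Ld i v = 0 := by
      apply Finset.sum_eq_zero
      intro i _
      rw [hv i]
      simp [effRes, sub_self]
    have h2 : acc G M v = 0 := by
      apply Finset.sum_eq_zero
      intro i hi
      simp only [Finset.mem_filter, Finset.mem_univ, true_and] at hi
      exact absurd (hv i) hi
    have h3 : kemeny G M = 0 := by
      apply Finset.sum_eq_zero
      intro i _
      apply Finset.sum_eq_zero
      intro j hj
      simp only [Finset.mem_filter, Finset.mem_univ, true_and] at hj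
      exact absurd ((hv j).trans (hv i).symm) hj
    rw [h1, h2, h3]; ring
  -- main case
  set d : V → ℝ := fun i => (G.degree i : ℝ) with hd_def
  set a : V → V → ℝ := fun i k => if G.Adj i k then 1 else 0 with ha_def
  set m2 : ℝ := 2 * (G.edgeFinset.card : ℝ) with hm2_def
  have hdeg : ∀ i : V, 0 < G.degree i := by
    intro i
    rw [G.degree_pos_iff_exists_adj]
    obtain ⟨u, hu⟩ := exists_ne i
    obtain ⟨p⟩ := hG.preconnected i u
    cases p with
    | nil => exact absurd rfl hu
    | cons h _ => exact ⟨_, h⟩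
  have hdpos : ∀ i : V, 0 < d i := by
    intro i
    simp only [hd_def]
    exact_mod_cast hdeg i
  have hdne : ∀ i : V, d i ≠ 0 := fun i => ne_of_gt (hdpos i)
  have hm2pos : 0 < m2 := by
    obtain ⟨w, hw⟩ := (G.degree_pos_iff_exists_adj v).1 (hdeg v)
    have hmem : s(v, w) ∈ G.edgeFinset := SimpleGraph.mem_edgeFinset.2 hw
    have hcard : 0 < G.edgeFinset.card := Finset.card_pos.2 ⟨_, hmem⟩
    have : (0 : ℝ) < (G.edgeFinset.card : ℝ) := by exact_mod_cast hcard
    rw [hm2_def]; linarith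
  have hm2ne : m2 ≠ 0 := ne_of_gt hm2pos
  have ha_symm : ∀ i k, a i k = a k i := by
    intro i k
    by_cases h : G.Adj i k
    · simp [ha_def, h, h.symm]
    · have h2 : ¬ G.Adj k i := fun h' => h h'.symm
      simp [ha_def, h, h2]
  have hsum_a : ∀ i, ∑ k, a i k = d i := by
    intro i
    simp only [ha_def, hd_def, Finset.sum_boole]
    rw [← G.card_neighborFinset_eq_degree i]
    congr 1
    rw [SimpleGraph.neighborFinset_eq_filter]
  have hsum_d : ∑ i, d i = m2 := by
    simp only [hd_def, hm2_def]
    rw [← Nat.cast_sum, G.sum_degrees_eq_twice_card_edges]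
    push_cast
    ring
  have htp : ∀ i k, transP G i k = a i k / d i := by
    intro i k
    by_cases h : G.Adj i k <;> simp [transP, ha_def, hd_def, h, one_div]
  have hda : ∀ i k, d i * transP G i k = a i k := by
    intro i k
    rw [htp, mul_div_cancel₀ _ (hdne i)]
  have hMd : ∀ i j, i ≠ j → d i * M i j = d i + ∑ k, a i k * M k j := by
    intro i j h
    rw [hM.2 i j h, mul_add, mul_one, Finset.mul_sum]
    congr 1
    apply Finset.sum_congr rfl
    intro k _
    rw [← hda i k]; ring
  -- Key summation identity: ∑ k, a j k * M k j = m2 - d j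
  have hC : ∀ j, ∑ k, a j k * M k j = m2 - d j := by
    intro j
    have swap : ∑ i, ∑ k, a i k * M k j = ∑ i, d i * M i j := by
      rw [Finset.sum_comm]
      apply Finset.sum_congr rfl
      intro k _
      rw [← Finset.sum_mul]
      congr 1
      rw [← hsum_a k]
      exact Finset.sum_congr rfl fun i _ => ha_symm i k
    have main : ∑ i, (d i * M i j - ∑ k, a i k * M k j) = 0 := by
      rw [Finset.sum_sub_distrib, swap, sub_self]
    have eval : ∀ i, (d i * M i j - ∑ k, a i k * M k j)
        = d i - (if i = j then d j + ∑ k, a j k * M k j else 0) := by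
      intro i
      by_cases h : i = j
      · subst h
        rw [hM.1, if_pos rfl]
        ring
      · rw [hMd i j h, if_neg h]
        ring
    rw [Finset.sum_congr rfl fun i _ => eval i, Finset.sum_sub_distrib,
      Finset.sum_ite_eq', if_pos (Finset.mem_univ j), hsum_d] at main
    linarith
  -- Laplacian applied to columns of M
  have hD : ∀ j i, (lap G *ᵥ fun k => M k j) i = d i - (if i = j then m2 else 0) := by
    intro j i
    have hl : ∀ k, lap G i k = (if i = k then d i else 0) - a i k := by
      intro k
      by_cases h : i = k
      · subst h; simp [lap, ha_def, hd_def]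
      · by_cases h2 : G.Adj i k <;> simp [lap, ha_def, h, h2]
    have hmv : (lap G *ᵥ fun k => M k j) i = ∑ k, lap G i k * M k j := rfl
    rw [hmv]
    have hsplit : ∑ k, lap G i k * M k j
        = (∑ k, (if k = i then d i * M k j else 0)) - ∑ k, a i k * M k j := by
      rw [← Finset.sum_sub_distrib]
      apply Finset.sum_congr rfl
      intro k _
      rw [hl k, sub_mul]
      congr 1
      by_cases h : i = k
      · subst h; simp
      · simp [h, Ne.symm h]
    rw [hsplit, Finset.sum_ite_eq', if_pos (Finset.mem_univ i)]
    by_cases h : i = j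
    · subst h
      rw [hM.1, hC, if_pos rfl]
      ring
    · have h1 := hMd i j h
      have h2 : ∑ k, a i k * M k j = d i * M i j - d i := by linarith
      rw [h2, if_neg h]
      ring
  -- algebraic lemma from Penrose equations
  have hLsym : (lap G)ᵀ = lap G := by
    ext i k
    simp only [Matrix.transpose_apply, lap]
    by_cases h : i = k
    · subst h; rfl
    · by_cases h2 : G.Adj i k
      · simp [h, Ne.symm h, h2, h2.symm]
      · have h3 : ¬ G.Adj k i := fun h' => h2 h'.symm
        simp [h, Ne.symm h, h2, h3]
  have halg : ∀ (w x : V → ℝ) (c : ℝ), c ≠ 0 → lap G *ᵥ w = c • x →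
      x ⬝ᵥ (Ld *ᵥ x) = c⁻¹ * (x ⬝ᵥ w) := by
    intro w x c hc hw
    have hx : x = c⁻¹ • (lap G *ᵥ w) := by
      rw [hw, smul_smul, inv_mul_cancel₀ hc, one_smul]
    have hvm : lap G *ᵥ w = w ᵥ* lap G := by
      have h := Matrix.mulVec_transpose (lap G) w
      rw [hLsym] at h
      exact h
    have key : (w ᵥ* lap G) ⬝ᵥ (Ld *ᵥ (w ᵥ* lap G)) = (w ᵥ* lap G) ⬝ᵥ w := by
      calc (w ᵥ* lap G) ⬝ᵥ (Ld *ᵥ (w ᵥ* lap G))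
          = ((w ᵥ* lap G) ᵥ* Ld) ⬝ᵥ (w ᵥ* lap G) := Matrix.dotProduct_mulVec _ _ _
        _ = (w ᵥ* (lap G * Ld)) ⬝ᵥ (lap G *ᵥ w) := by
            rw [Matrix.vecMul_vecMul, ← hvm]
        _ = ((w ᵥ* (lap G * Ld)) ᵥ* lap G) ⬝ᵥ w := Matrix.dotProduct_mulVec _ _ _
        _ = (w ᵥ* (lap G * Ld * lap G)) ⬝ᵥ w := by rw [Matrix.vecMul_vecMul]
        _ = (w ᵥ* lap G) ⬝ᵥ w := by rw [hLd.1]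
    calc x ⬝ᵥ (Ld *ᵥ x)
        = (c⁻¹ • (lap G *ᵥ w)) ⬝ᵥ (Ld *ᵥ (c⁻¹ • (lap G *ᵥ w))) := by rw [← hx]
      _ = c⁻¹ * (c⁻¹ * ((lap G *ᵥ w) ⬝ᵥ (Ld *ᵥ (lap G *ᵥ w)))) := by
          rw [Matrix.mulVec_smul, smul_dotProduct, dotProduct_smul,
            smul_eq_mul, smul_eq_mul]
      _ = c⁻¹ * (c⁻¹ * ((lap G *ᵥ w) ⬝ᵥ w)) := by rw [hvm, key, ← hvm]
      _ = c⁻¹ * (c⁻¹ * (c * (x ⬝ᵥ w))) := by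
          rw [hw, smul_dotProduct, smul_eq_mul]
      _ = c⁻¹ * (x ⬝ᵥ w) := by field_simp
  -- commute time identity
  have commute : ∀ i, effRes Ld i v = (M i v + M v i) / m2 := by
    intro i
    by_cases hiv : i = v
    · subst hiv
      simp [effRes, sub_self, hM.1]
    · set w : V → ℝ := fun k => M k v - M k i with hw_def
      set x : V → ℝ := Pi.single i 1 - Pi.single v 1 with hx_def
      have hw : lap G *ᵥ w = m2 • x := by
        funext k
        have hsub : w = (fun k => M k v) - (fun k => M k i) := rfl
        rw [hsub, Matrix.mulVec_sub]
        have h1 := hD v k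
        have h2 := hD i k
        simp only [Pi.sub_apply, h1, h2, hx_def, Pi.smul_apply, Pi.single_apply,
          smul_eq_mul]
        by_cases hki : k = i <;> by_cases hkv : k = v
        · exact absurd (hki.symm.trans hkv) hiv
        · simp only [if_pos hki, if_neg hkv]; ring
        · simp only [if_neg hki, if_pos hkv]; ring
        · simp only [if_neg hki, if_neg hkv]; ring
      have heff : effRes Ld i v = x ⬝ᵥ (Ld *ᵥ x) := rfl
      rw [heff, halg w x m2 hm2ne hw]
      have hxw : x ⬝ᵥ w = M i v + M v i := by
        rw [hx_def, sub_dotProduct, single_dotProduct,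
          single_dotProduct, one_mul, one_mul, hw_def]
        simp only [hM.1]
        ring
      rw [hxw]
      field_simp
  -- the Kemeny vector
  set Kd : V → ℝ := fun i => ∑ j, d j * M i j with hKd_def
  have hPsum : ∀ i, ∑ k, transP G i k = 1 := by
    intro i
    have h : d i * ∑ k, transP G i k = d i * 1 := by
      rw [mul_one, Finset.mul_sum, Finset.sum_congr rfl fun k _ => hda i k, hsum_a]
    exact mul_left_cancel₀ (hdne i) h
  have hret : ∀ i, ∑ k, transP G i k * M k i = (m2 - d i) / d i := by
    intro i
    rw [← hC i, Finset.sum_div]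
    apply Finset.sum_congr rfl
    intro k _
    rw [htp i k]
    ring
  have hharm : ∀ i, ∑ k, transP G i k * Kd k = Kd i := by
    intro i
    calc ∑ k, transP G i k * Kd k
        = ∑ k, ∑ j, transP G i k * (d j * M k j) := by
          apply Finset.sum_congr rfl
          intro k _
          rw [hKd_def]
          exact Finset.mul_sum _ _ _
      _ = ∑ j, d j * ∑ k, transP G i k * M k j := by
          rw [Finset.sum_comm]
          apply Finset.sum_congr rfl
          intro j _
          rw [Finset.mul_sum]
          apply Finset.sum_congr rfl
          intro k _
          ring
      _ = ∑ j, d j * (if j = i then (m2 - d i) / d i else M i j - 1) := by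
          apply Finset.sum_congr rfl
          intro j _
          congr 1
          by_cases h : j = i
          · subst h; rw [if_pos rfl, hret]
          · rw [if_neg h]
            have h2 := hM.2 i j (Ne.symm h)
            linarith
      _ = ∑ j, (d j * (M i j - 1) + if j = i then m2 else 0) := by
          apply Finset.sum_congr rfl
          intro j _
          by_cases h : j = i
          · subst h
            rw [if_pos rfl, if_pos rfl, hM.1, mul_div_cancel₀ _ (hdne j)]
            ring
          · rw [if_neg h, if_neg h, add_zero]
      _ = Kd i := by
          rw [Finset.sum_add_distrib, Finset.sum_ite_eq', if_pos (Finset.mem_univ i)]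
          have e : ∀ j : V, d j * (M i j - 1) = d j * M i j - d j := fun j => by ring
          rw [Finset.sum_congr rfl fun j _ => e j, Finset.sum_sub_distrib, hsum_d]
          rw [hKd_def]
          ring
  have hPpos : ∀ i k, G.Adj i k → 0 < transP G i k := by
    intro i k h
    rw [htp]
    simp only [ha_def, if_pos h]
    exact div_pos one_pos (hdpos i)
  have hPnn : ∀ i k, 0 ≤ transP G i k := by
    intro i k
    by_cases h : G.Adj i k
    · exact le_of_lt (hPpos i k h)
    · rw [htp]
      simp [ha_def, if_neg h]
  -- Kd is constant on the connected graph
  have hconst : ∀ i, Kd i = Kd v := by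
    obtain ⟨i0, _, hmax⟩ := Finset.exists_max_image (Finset.univ : Finset V) Kd
      ⟨v, Finset.mem_univ v⟩
    have key : ∀ x y, Kd x = Kd i0 → G.Adj x y → Kd y = Kd i0 := by
      intro x y hx hxy
      have hz : ∑ k, transP G x k * (Kd i0 - Kd k) = 0 := by
        have e : ∀ k : V, transP G x k * (Kd i0 - Kd k)
            = Kd i0 * transP G x k - transP G x k * Kd k := fun k => by ring
        rw [Finset.sum_congr rfl fun k _ => e k, Finset.sum_sub_distrib,
          ← Finset.mul_sum, hPsum x, hharm x, hx]
        ring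
      have hnn : ∀ k ∈ Finset.univ, 0 ≤ transP G x k * (Kd i0 - Kd k) := by
        intro k _
        apply mul_nonneg (hPnn x k)
        have := hmax k (Finset.mem_univ k)
        linarith
      have hterm := (Finset.sum_eq_zero_iff_of_nonneg hnn).1 hz y (Finset.mem_univ y)
      have hP := hPpos x y hxy
      have := (mul_eq_zero.1 hterm).resolve_left (ne_of_gt hP)
      linarith
    have walkind : ∀ {x u : V} (p : G.Walk x u), Kd x = Kd i0 → Kd u = Kd i0 := by
      intro x u p
      induction p with
      | nil => exact id
      | cons h p ih => exact fun hx => ih (key _ _ hx h)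
    intro i
    obtain ⟨p⟩ := hG.preconnected i0 i
    obtain ⟨q⟩ := hG.preconnected i0 v
    rw [walkind p rfl, walkind q rfl]
  -- assembling everything
  have hstat : ∀ i, statPi G i = d i / m2 := by
    intro i
    simp only [statPi, hd_def, hm2_def]
  have hLHS : ∑ i, d i * effRes Ld i v = (∑ i, d i * M i v) / m2 + Kd v / m2 := by
    rw [Finset.sum_congr rfl fun i (_ : i ∈ Finset.univ) => by rw [commute i]]
    have e : ∀ i : V, d i * ((M i v + M v i) / m2)
        = d i * M i v / m2 + d i * M v i / m2 := fun i => by ring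
    rw [Finset.sum_congr rfl fun i _ => e i, Finset.sum_add_distrib,
      ← Finset.sum_div, ← Finset.sum_div]
  have hacc : acc G M v = (∑ i, d i * M i v) / m2 := by
    have h0 : acc G M v = ∑ i, statPi G i * M i v := by
      unfold acc
      apply Finset.sum_subset (Finset.subset_univ _)
      intro x _ hx
      simp only [Finset.mem_filter, Finset.mem_univ, true_and, not_not] at hx
      rw [hx, hM.1, mul_zero]
    rw [h0, Finset.sum_congr rfl fun i (_ : i ∈ Finset.univ) => by rw [hstat i]]
    rw [Finset.sum_div]
    apply Finset.sum_congr rfl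
    intro i _
    ring
  have hkem : kemeny G M = Kd v / m2 := by
    have h1 : kemeny G M = ∑ i, ∑ j, statPi G i * M i j * statPi G j := by
      unfold kemeny
      apply Finset.sum_congr rfl
      intro i _
      apply Finset.sum_subset (Finset.subset_univ _)
      intro x _ hx
      simp only [Finset.mem_filter, Finset.mem_univ, true_and, not_not] at hx
      rw [hx, hM.1]
      ring
    rw [h1]
    have h2 : ∀ i : V, ∑ j, statPi G i * M i j * statPi G j = Kd v / m2 * (d i / m2) := by
      intro i
      have : ∑ j, statPi G i * M i j * statPi G j = d i / m2 * (Kd i / m2) := by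
        rw [Finset.sum_congr rfl fun j (_ : j ∈ Finset.univ) => by rw [hstat i, hstat j]]
        rw [hKd_def]
        rw [Finset.sum_div, Finset.mul_sum]
        apply Finset.sum_congr rfl
        intro j _
        ring
      rw [this, hconst i]
      ring
    rw [Finset.sum_congr rfl fun i (_ : i ∈ Finset.univ) => h2 i, ← Finset.mul_sum,
      ← Finset.sum_div, hsum_d]
    field_simp
  rw [hLHS, hacc, hkem]
end

section
/- For a simple random walk on a connected graph G with m edges, the commute time between any two vertices i and j equals 2m times the effective resistance: m_{i,j} + m_{j,i} = 2m · r^G_{i,j}. -/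
open SimpleGraph Finset Matrix
open scoped Classical

section Aux

variable {V : Type*} [Fintype V] [DecidableEq V] (G : SimpleGraph V)

lemma degree_cast_eq_sum (k : V) :
    (G.degree k : ℝ) = ∑ l, if G.Adj k l then (1 : ℝ) else 0 := by
  rw [Finset.sum_boole]
  norm_cast
  simp [SimpleGraph.degree, SimpleGraph.neighborFinset_eq_filter]

lemma lap_mulVec (x : V → ℝ) (k : V) :
    (lap G *ᵥ x) k = (G.degree k : ℝ) * x k - ∑ l, if G.Adj k l then x l else 0 := by
  have h : ∀ l, lap G k l * x l =
      (if k = l then (G.degree k : ℝ) * x l else 0) - (if G.Adj k l then x l else 0) := by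
    intro l
    by_cases hkl : k = l
    · subst hkl; simp [lap]
    · by_cases ha : G.Adj k l <;> simp [lap, hkl, ha]
  simp only [Matrix.mulVec, dotProduct, h, Finset.sum_sub_distrib,
    Finset.sum_ite_eq, Finset.mem_univ, if_true]

lemma lap_symm (k l : V) : lap G k l = lap G l k := by
  by_cases hkl : k = l
  · subst hkl; rfl
  · have : l ≠ k := fun h => hkl h.symm
    simp [lap, hkl, this, G.adj_comm]

lemma lap_row_sum (k : V) : ∑ l, lap G k l = 0 := by
  have := lap_mulVec G (fun _ => (1 : ℝ)) k
  simpa [Matrix.mulVec, dotProduct, ← degree_cast_eq_sum G k] using this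

lemma sum_lap_mulVec (x : V → ℝ) : ∑ k, (lap G *ᵥ x) k = 0 := by
  simp only [Matrix.mulVec, dotProduct]
  rw [Finset.sum_comm]
  apply Finset.sum_eq_zero
  intro l _
  rw [← Finset.sum_mul]
  have : ∑ k, lap G k l = 0 := by
    rw [Finset.sum_congr rfl (fun k _ => lap_symm G k l)]
    exact lap_row_sum G l
  rw [this, zero_mul]

lemma mfpt_lap_off (hdeg : ∀ v, 0 < G.degree v) {M : V → V → ℝ} (hM : IsMFPT G M)
    (j k : V) (hk : k ≠ j) :
    (lap G *ᵥ (fun l => M l j)) k = G.degree k := by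
  rw [lap_mulVec]
  have hd : (G.degree k : ℝ) ≠ 0 := by
    exact_mod_cast (hdeg k).ne'
  have h1 : M k j = 1 + ∑ l, transP G k l * M l j := hM.2 k j hk
  have h2 : ∑ l, transP G k l * M l j = (∑ l, if G.Adj k l then M l j else 0) / G.degree k := by
    rw [Finset.sum_div]
    apply Finset.sum_congr rfl
    intro l _
    by_cases ha : G.Adj k l
    · simp [transP, ha]; ring
    · simp [transP, ha]
  rw [h1, h2]
  field_simp
  ring

lemma mfpt_lap (hdeg : ∀ v, 0 < G.degree v) {M : V → V → ℝ} (hM : IsMFPT G M) (j : V) :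
    lap G *ᵥ (fun l => M l j) =
      fun k => (G.degree k : ℝ) - (2 * G.edgeFinset.card : ℝ) * (if k = j then 1 else 0) := by
  funext k
  by_cases hk : k = j
  · have hsum := sum_lap_mulVec G (fun l => M l j)
    have hsplit : ∑ x, (lap G *ᵥ (fun l => M l j)) x
        = (lap G *ᵥ (fun l => M l j)) j + ∑ x ∈ Finset.univ.erase j,
            (lap G *ᵥ (fun l => M l j)) x :=
      (Finset.add_sum_erase _ _ (Finset.mem_univ j)).symm
    have hoff : ∑ x ∈ Finset.univ.erase j, (lap G *ᵥ (fun l => M l j)) x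
        = ∑ x ∈ Finset.univ.erase j, (G.degree x : ℝ) := by
      apply Finset.sum_congr rfl
      intro x hx
      exact mfpt_lap_off G hdeg hM j x (Finset.ne_of_mem_erase hx)
    have hdegsum : ∑ x ∈ Finset.univ.erase j, (G.degree x : ℝ)
        = (2 * G.edgeFinset.card : ℝ) - (G.degree j : ℝ) := by
      have h1 : ∑ x, (G.degree x : ℝ) = (2 * G.edgeFinset.card : ℝ) := by
        exact_mod_cast congrArg (Nat.cast (R := ℝ)) G.sum_degrees_eq_twice_card_edges
      have h2 : ∑ x, (G.degree x : ℝ)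
          = (G.degree j : ℝ) + ∑ x ∈ Finset.univ.erase j, (G.degree x : ℝ) :=
        (Finset.add_sum_erase _ _ (Finset.mem_univ j)).symm
      linarith
    have hfin : (lap G *ᵥ (fun l => M l j)) j
        = (G.degree j : ℝ) - (2 * G.edgeFinset.card : ℝ) := by
      rw [hsplit, hoff, hdegsum] at hsum
      linarith
    rw [hk, hfin, if_pos rfl, mul_one]
  · simp [mfpt_lap_off G hdeg hM j k hk, hk]

lemma lap_ker_adj (hG : G.Connected) {v : V → ℝ} (hv : lap G *ᵥ v = 0) :
    ∀ x y, G.Adj x y → v x = v y := by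
  have h0 : ∑ k, v k * (lap G *ᵥ v) k = 0 := by simp [hv]
  have hexp : ∑ k, v k * (lap G *ᵥ v) k
      = ∑ k, ∑ l, (if G.Adj k l then v k * v k - v k * v l else 0) := by
    apply Finset.sum_congr rfl
    intro k _
    rw [lap_mulVec]
    have e1 : (G.degree k : ℝ) * v k = ∑ l, if G.Adj k l then v k else 0 := by
      rw [degree_cast_eq_sum, Finset.sum_mul]
      apply Finset.sum_congr rfl
      intro l _
      split <;> simp
    rw [e1, ← Finset.sum_sub_distrib, Finset.mul_sum]
    apply Finset.sum_congr rfl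
    intro l _
    by_cases ha : G.Adj k l <;> simp [ha] <;> ring
  have hsq : ∑ k, ∑ l, (if G.Adj k l then (v k - v l) ^ 2 else 0) = 0 := by
    have hc : ∑ k, ∑ l, (if G.Adj k l then v k * v k - v k * v l else 0)
        = ∑ k, ∑ l, (if G.Adj k l then v l * v l - v l * v k else 0) := by
      rw [Finset.sum_comm]
      apply Finset.sum_congr rfl; intro k _
      apply Finset.sum_congr rfl; intro l _
      rw [G.adj_comm]
    have h2 : ∑ k, ∑ l, (if G.Adj k l then (v k - v l) ^ 2 else 0)
        = ∑ k, ∑ l, (if G.Adj k l then v k * v k - v k * v l else 0)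
          + ∑ k, ∑ l, (if G.Adj k l then v l * v l - v l * v k else 0) := by
      rw [← Finset.sum_add_distrib]
      apply Finset.sum_congr rfl; intro k _
      rw [← Finset.sum_add_distrib]
      apply Finset.sum_congr rfl; intro l _
      by_cases ha : G.Adj k l <;> simp [ha] <;> ring
    have h0' : ∑ k, ∑ l, (if G.Adj k l then v k * v k - v k * v l else 0) = 0 := by
      rw [← hexp]; exact h0
    rw [h2, ← hc, h0']
    norm_num
  intro x y hxy
  have hterm : ∀ k ∈ (Finset.univ : Finset V),
      (0 : ℝ) ≤ ∑ l, (if G.Adj k l then (v k - v l) ^ 2 else 0) := by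
    intro k _
    apply Finset.sum_nonneg
    intro l _
    by_cases ha : G.Adj k l <;> simp [ha] <;> positivity
  have hrow := (Finset.sum_eq_zero_iff_of_nonneg hterm).mp hsq x (Finset.mem_univ x)
  have hterm2 : ∀ l ∈ (Finset.univ : Finset V),
      (0 : ℝ) ≤ (if G.Adj x l then (v x - v l) ^ 2 else 0) := by
    intro l _
    by_cases ha : G.Adj x l <;> simp [ha] <;> positivity
  have h3 := (Finset.sum_eq_zero_iff_of_nonneg hterm2).mp hrow y (Finset.mem_univ y)
  rw [if_pos hxy] at h3
  have := pow_eq_zero_iff (n := 2) (by norm_num) |>.mp h3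
  linarith [sub_eq_zero.mp this]

lemma lap_ker_eq (hG : G.Connected) {v : V → ℝ} (hv : lap G *ᵥ v = 0) (a b : V) :
    v a = v b := by
  obtain ⟨w⟩ := hG.preconnected a b
  induction w with
  | nil => rfl
  | cons h p ih => exact (lap_ker_adj G hG hv _ _ h).trans ih

end Aux

/-- commute time identity `m_{i,j} + m_{j,i} = 2m · r^G_{i,j}`. -/
theorem commute_time_eq {V : Type*} [Fintype V] [DecidableEq V]
    (G : SimpleGraph V) (hG : G.Connected) (M : V → V → ℝ) (hM : IsMFPT G M)
    (Ld : Matrix V V ℝ) (hLd : IsMoorePenroseInv (lap G) Ld) (i j : V) :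
    M i j + M j i = 2 * (G.edgeFinset.card : ℝ) * effRes Ld i j := by
  by_cases hij : i = j
  · subst hij
    simp [hM.1 i, effRes, mulVec_sub, sub_self]
  · have : Nontrivial V := ⟨i, j, hij⟩
    have hdeg : ∀ v, 0 < G.degree v := by
      intro v
      obtain ⟨u, hu⟩ := exists_ne v
      obtain ⟨w⟩ := hG.preconnected v u
      cases w with
      | nil => exact absurd rfl hu.symm
      | cons h p => exact G.degree_pos_iff_exists_adj v |>.mpr ⟨_, h⟩
    set m : ℝ := (G.edgeFinset.card : ℝ) with hm
    set u : V → ℝ := Pi.single i 1 - Pi.single j 1 with hu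
    set y : V → ℝ := (fun l => M l j) - (fun l => M l i) with hy
    have huk : ∀ k, u k = (if k = i then (1:ℝ) else 0) - (if k = j then 1 else 0) := by
      intro k
      simp [hu, Pi.single_apply]
    have hLy : lap G *ᵥ y = (2 * m) • u := by
      rw [hy, mulVec_sub, mfpt_lap G hdeg hM j, mfpt_lap G hdeg hM i]
      funext k
      simp only [Pi.sub_apply, Pi.smul_apply, smul_eq_mul, huk k]
      ring
    set w : V → ℝ := Ld *ᵥ (lap G *ᵥ y) with hw
    have hker : lap G *ᵥ (y - w) = 0 := by
      rw [mulVec_sub, hw, Matrix.mulVec_mulVec, Matrix.mulVec_mulVec, hLd.1, sub_self]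
    have hconst : (y - w) i = (y - w) j := lap_ker_eq G hG hker i j
    have hyij : y i - y j = M i j + M j i := by
      simp only [hy, Pi.sub_apply, hM.1 i, hM.1 j]
      ring
    have hwij : w i - w j = 2 * m * effRes Ld i j := by
      have hwu : w = (2 * m) • (Ld *ᵥ u) := by
        rw [hw, hLy, Matrix.mulVec_smul]
      have hdot : u ⬝ᵥ (Ld *ᵥ u) = (Ld *ᵥ u) i - (Ld *ᵥ u) j := by
        simp [hu, sub_dotProduct, single_dotProduct]
      rw [hwu]
      simp only [Pi.smul_apply, smul_eq_mul]
      rw [show effRes Ld i j = u ⬝ᵥ (Ld *ᵥ u) from rfl, hdot]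
      ring
    have : y i - y j = w i - w j := by
      have h1 : y i - w i = y j - w j := by simpa [Pi.sub_apply] using hconst
      linarith
    rw [← hyij, this, hwij]
end

section
/- Let G be a connected graph with a bridge e = {v1, v2} whose removal yields components G1 (containing v1) and G2 (containing v2), with m1, m2 edges respectively, and m = m1 + m2 + 1 edges in G. Then Kemeny's constant satisfies κ(G) = κ(G1) + κ(G2) + ((m2+1)/m)·α_{G1}(v1) + ((m1+1)/m)·α_{G2}(v2) + (2m1+1)(2m2+1)/(2m). -/
open SimpleGraph Finset Matrix
open scoped Classical

section RandomWalkLemmas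

variable {V : Type*} [Fintype V] {G : SimpleGraph V}

lemma transP_nonneg (G : SimpleGraph V) (i k : V) : 0 ≤ transP G i k := by
  unfold transP; split <;> positivity

lemma degree_pos_of_adj {i k : V} (h : G.Adj i k) : 0 < G.degree i := by
  rw [G.degree_pos_iff_exists_adj]; exact ⟨k, h⟩

lemma sum_transP (i : V) (hd : G.degree i ≠ 0) : ∑ k, transP G i k = 1 := by
  unfold transP
  rw [← Finset.sum_filter]
  rw [Finset.sum_const]
  have h : (Finset.univ.filter (G.Adj i)) = G.neighborFinset i := by ext; simp
  rw [h]
  simp only [SimpleGraph.card_neighborFinset_eq_degree, nsmul_eq_mul]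
  field_simp

lemma transP_pos {i k : V} (h : G.Adj i k) : 0 < transP G i k := by
  unfold transP
  rw [if_pos h]
  have := degree_pos_of_adj h
  positivity

/-- Maximum principle: a function harmonic away from `j` attains its max at `j`. -/
lemma max_principle (hG : G.Connected) (y : V → ℝ) (j : V)
    (hy : ∀ i, i ≠ j → y i = ∑ k, transP G i k * y k) : ∀ i, y i ≤ y j := by
  have hne : Nonempty V := hG.nonempty
  obtain ⟨i0, -, hmax⟩ := Finset.exists_max_image Finset.univ y ⟨Classical.arbitrary V, Finset.mem_univ _⟩
  simp only [Finset.mem_univ, forall_true_left] at hmax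
  suffices h : y j = y i0 by intro i; rw [h]; exact hmax i
  obtain ⟨p⟩ := hG.preconnected i0 j
  have key : ∀ (x : V) (_ : G.Walk x j), y x = y i0 → y j = y i0 := by
    intro x p
    induction p with
    | nil => intro h; exact h
    | @cons a b c hadj p ih =>
      intro hx
      by_cases haj : a = c
      · subst haj; exact hx
      · have hda : G.degree a ≠ 0 := (degree_pos_of_adj hadj).ne'
        have heq : y a = ∑ k, transP G a k * y k := hy a haj
        have h1 : ∑ k, transP G a k * (y i0 - y k)
            = (∑ k, transP G a k) * y i0 - ∑ k, transP G a k * y k := by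
          rw [Finset.sum_mul, ← Finset.sum_sub_distrib]
          exact Finset.sum_congr rfl fun k _ => by ring
        rw [sum_transP a hda, ← heq, one_mul, hx, sub_self] at h1
        have h2 := (Finset.sum_eq_zero_iff_of_nonneg
          (fun k _ => mul_nonneg (transP_nonneg G a k) (sub_nonneg.2 (hmax k)))).1 h1
        have h3 := h2 b (Finset.mem_univ b)
        have h4 : y b = y i0 := by
          rcases mul_eq_zero.1 h3 with h | h
          · exact absurd h (transP_pos hadj).ne'
          · linarith [sub_eq_zero.1 h]
        exact ih hy p h4
  exact key i0 p rfl

/-- Uniqueness of mean first passage times on a connected graph. -/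
lemma mfpt_unique (hG : G.Connected) {M M' : V → V → ℝ}
    (hM : IsMFPT G M) (hM' : IsMFPT G M') : M = M' := by
  funext i j
  set y : V → ℝ := fun i => M i j - M' i j with hy
  have hharm : ∀ i, i ≠ j → y i = ∑ k, transP G i k * y k := by
    intro i hij
    have := hM.2 i j hij
    have := hM'.2 i j hij
    simp only [hy]
    rw [hM.2 i j hij, hM'.2 i j hij]
    have : ∑ k, transP G i k * (M k j - M' k j)
        = ∑ k, transP G i k * M k j - ∑ k, transP G i k * M' k j := by
      rw [← Finset.sum_sub_distrib]
      exact Finset.sum_congr rfl fun k _ => by ring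
    rw [this]; ring
  have hyj : y j = 0 := by simp [hy, hM.1 j, hM'.1 j]
  have h1 := max_principle hG y j hharm i
  have hharm' : ∀ i, i ≠ j → (-y) i = ∑ k, transP G i k * (-y) k := by
    intro i hij
    simp only [Pi.neg_apply, hharm i hij, ← Finset.sum_neg_distrib]
    exact Finset.sum_congr rfl fun k _ => by ring
  have h2 := max_principle hG (-y) j hharm' i
  simp only [Pi.neg_apply, hyj, neg_zero] at h1 h2
  have : y i = 0 := le_antisymm h1 (by linarith)
  simpa [hy, sub_eq_zero] using this
lemma indicator_sum_deg (k : V) :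
    ∑ i, (if G.Adj i k then (1:ℝ) else 0) = G.degree k := by
  rw [← Finset.sum_filter, Finset.sum_const]
  have h : (Finset.univ.filter (fun i => G.Adj i k)) = G.neighborFinset k := by
    ext x; simp [SimpleGraph.adj_comm]
  rw [h]; simp

lemma deg_mul_transP (i k : V) :
    (G.degree i : ℝ) * transP G i k = if G.Adj i k then (1:ℝ) else 0 := by
  unfold transP
  split
  · next h =>
    have hd : (G.degree i : ℝ) ≠ 0 := by
      have : 0 < G.degree i := by rw [G.degree_pos_iff_exists_adj]; exact ⟨k, h⟩
      exact_mod_cast this.ne'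
    field_simp
  · ring

/-- Return time identity: `∑_{k ~ j} M k j = 2m - deg j`. -/
lemma return_identity {M : V → V → ℝ} (hM : IsMFPT G M) (j : V) :
    ∑ k, (if G.Adj j k then (1:ℝ) else 0) * M k j
      = 2 * G.edgeFinset.card - G.degree j := by
  set S : ℝ := ∑ i, (G.degree i : ℝ) * M i j with hS
  have h1 : S = ∑ i ∈ Finset.univ.erase j, (G.degree i : ℝ) * M i j := by
    rw [Finset.sum_erase _ (by rw [hM.1 j]; ring)]
  have h2 : S = (∑ i ∈ Finset.univ.erase j, (G.degree i : ℝ))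
      + ∑ i ∈ Finset.univ.erase j, ∑ k, (if G.Adj i k then (1:ℝ) else 0) * M k j := by
    rw [h1, ← Finset.sum_add_distrib]
    apply Finset.sum_congr rfl
    intro i hi
    rw [hM.2 i j (Finset.ne_of_mem_erase hi)]
    rw [mul_add, mul_one, Finset.mul_sum]
    congr 1
    apply Finset.sum_congr rfl
    intro k _
    rw [← mul_assoc, deg_mul_transP]
  have hdeg : (∑ i ∈ Finset.univ.erase j, (G.degree i : ℝ))
      = 2 * G.edgeFinset.card - G.degree j := by
    have := Finset.add_sum_erase Finset.univ (fun i => (G.degree i : ℝ)) (Finset.mem_univ j)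
    have hall : ∑ i, (G.degree i : ℝ) = 2 * G.edgeFinset.card := by
      rw [← Nat.cast_sum]
      rw [SimpleGraph.sum_degrees_eq_twice_card_edges]
      push_cast; ring
    linarith
  have h3 : ∑ i ∈ Finset.univ.erase j, ∑ k, (if G.Adj i k then (1:ℝ) else 0) * M k j
      = S - ∑ k, (if G.Adj j k then (1:ℝ) else 0) * M k j := by
    have swap : ∀ s : Finset V, ∑ i ∈ s, ∑ k, (if G.Adj i k then (1:ℝ) else 0) * M k j
        = ∑ k, (∑ i ∈ s, (if G.Adj i k then (1:ℝ) else 0)) * M k j := by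
      intro s
      rw [Finset.sum_comm]
      exact Finset.sum_congr rfl fun k _ => by rw [Finset.sum_mul]
    have hfull := Finset.add_sum_erase Finset.univ
      (fun i => ∑ k, (if G.Adj i k then (1:ℝ) else 0) * M k j) (Finset.mem_univ j)
    rw [swap Finset.univ] at hfull
    have : ∑ k, (∑ i, (if G.Adj i k then (1:ℝ) else 0)) * M k j = S := by
      rw [hS]
      apply Finset.sum_congr rfl
      intro k _
      rw [indicator_sum_deg]
    rw [this] at hfull
    linarith
  rw [h2, hdeg, h3] at *
  linarith
lemma degree_pos_conn (hG : G.Connected) (hc : G.edgeFinset.card ≠ 0) (i : V) :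
    G.degree i ≠ 0 := by
  have hne : G.edgeFinset.Nonempty := Finset.card_ne_zero.1 hc
  obtain ⟨e, he⟩ := hne
  rw [SimpleGraph.mem_edgeFinset] at he
  induction e with
  | h a b =>
    rw [SimpleGraph.mem_edgeSet] at he
    have hnt : ∃ t, t ≠ i := by
      by_cases hai : a = i
      · exact ⟨b, fun h => G.loopless.irrefl i (by rwa [hai, h] at he)⟩
      · exact ⟨a, hai⟩
    obtain ⟨t, ht⟩ := hnt
    obtain ⟨p⟩ := hG.preconnected i t
    have hnil : ¬ p.Nil := SimpleGraph.Walk.not_nil_of_ne (Ne.symm ht)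
    have hadj := p.adj_snd hnil
    have : 0 < G.degree i := by rw [G.degree_pos_iff_exists_adj]; exact ⟨_, hadj⟩
    exact this.ne'

lemma statPi_sum (hc : G.edgeFinset.card ≠ 0) : ∑ j, statPi G j = 1 := by
  unfold statPi
  have h2m : (2 * (G.edgeFinset.card : ℝ)) ≠ 0 := by
    have : (G.edgeFinset.card : ℝ) ≠ 0 := Nat.cast_ne_zero.2 hc
    positivity
  have hsum : (∑ j, (G.degree j : ℝ)) = 2 * G.edgeFinset.card := by
    rw [← Nat.cast_sum, SimpleGraph.sum_degrees_eq_twice_card_edges]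
    push_cast
    ring
  rw [← Finset.sum_div, hsum, div_self h2m]

lemma random_target (hG : G.Connected) {M : V → V → ℝ} (hM : IsMFPT G M) (i : V) :
    ∑ j, statPi G j * M i j = kemeny G M := by
  by_cases hc : G.edgeFinset.card = 0
  · have hz : ∀ j, statPi G j = 0 := by
      intro j; unfold statPi; rw [hc]; push_cast; simp
    simp [hz, kemeny]
  · have hd : ∀ a : V, (G.degree a : ℝ) ≠ 0 := fun a =>
      Nat.cast_ne_zero.2 (degree_pos_conn hG hc a)
    have h2m : (2 * (G.edgeFinset.card : ℝ)) ≠ 0 := by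
      have : (G.edgeFinset.card : ℝ) ≠ 0 := Nat.cast_ne_zero.2 hc
      positivity
    set u : V → ℝ := fun a => ∑ j, statPi G j * M a j with hu
    have hret : ∀ a, ∑ k, transP G a k * M k a
        = (2 * G.edgeFinset.card - G.degree a) / G.degree a := by
      intro a
      have h := return_identity hM a
      have e : ∑ k, transP G a k * M k a
          = (∑ k, (if G.Adj a k then (1:ℝ) else 0) * M k a) / G.degree a := by
        rw [Finset.sum_div]
        apply Finset.sum_congr rfl
        intro k _
        unfold transP
        split <;> ring
      rw [e, h]
    have huh : ∀ a, u a = ∑ k, transP G a k * u k := by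
      intro a
      have e1 : u a = ∑ j ∈ Finset.univ.erase a, statPi G j * M a j :=
        (Finset.sum_erase _ (by rw [hM.1 a]; ring)).symm
      have e2 : u a = ∑ j ∈ Finset.univ.erase a,
          (statPi G j + ∑ k, transP G a k * (statPi G j * M k j)) := by
        rw [e1]
        apply Finset.sum_congr rfl
        intro j hj
        rw [hM.2 a j (Ne.symm (Finset.ne_of_mem_erase hj)), mul_comm, add_mul, one_mul,
          Finset.sum_mul]
        congr 1
        apply Finset.sum_congr rfl
        intro k _
        ring
      have e3 : ∑ j ∈ Finset.univ.erase a, statPi G j = 1 - statPi G a := by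
        have h5 : statPi G a + ∑ j ∈ Finset.univ.erase a, statPi G j = ∑ j, statPi G j :=
          Finset.add_sum_erase Finset.univ (fun j => statPi G j) (Finset.mem_univ a)
        have h1 := statPi_sum (G := G) hc
        linarith
      have e4 : ∑ j ∈ Finset.univ.erase a, ∑ k, transP G a k * (statPi G j * M k j)
          = ∑ k, transP G a k * (u k - statPi G a * M k a) := by
        rw [Finset.sum_comm]
        apply Finset.sum_congr rfl
        intro k _
        rw [← Finset.mul_sum]
        congr 1
        have h5 : statPi G a * M k a + ∑ j ∈ Finset.univ.erase a, statPi G j * M k j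
            = ∑ j, statPi G j * M k j :=
          Finset.add_sum_erase Finset.univ (fun j => statPi G j * M k j) (Finset.mem_univ a)
        have h6 : u k = ∑ j, statPi G j * M k j := rfl
        linarith
      have e5 : ∑ k, transP G a k * (u k - statPi G a * M k a)
          = (∑ k, transP G a k * u k) - statPi G a * ∑ k, transP G a k * M k a := by
        rw [Finset.mul_sum, ← Finset.sum_sub_distrib]
        apply Finset.sum_congr rfl
        intro k _
        ring
      have e6 : u a = (1 - statPi G a) + ((∑ k, transP G a k * u k)
          - statPi G a * ((2 * G.edgeFinset.card - G.degree a) / G.degree a)) := by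
        rw [e2, Finset.sum_add_distrib, e3, e4, e5, hret a]
      have hpia : statPi G a = (G.degree a : ℝ) / (2 * G.edgeFinset.card) := rfl
      have hgen : ∀ cR dR : ℝ, cR ≠ 0 → dR ≠ 0 →
          (1 - dR / (2 * cR)) - dR / (2 * cR) * ((2 * cR - dR) / dR) = 0 := by
        intro cR dR h1 h2
        field_simp
        ring
      have hz : (1 - statPi G a) - statPi G a
          * ((2 * (G.edgeFinset.card : ℝ) - G.degree a) / G.degree a) = 0 := by
        rw [hpia]
        exact hgen _ _ (Nat.cast_ne_zero.2 hc) (hd a)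
      linarith [e6, hz]
    have hconst : ∀ a b : V, u a = u b := fun a b =>
      le_antisymm (max_principle hG u b (fun x _ => huh x) a)
        (max_principle hG u a (fun x _ => huh x) b)
    have hk : kemeny G M = ∑ a, statPi G a * u a := by
      unfold kemeny
      apply Finset.sum_congr rfl
      intro a _
      rw [Finset.filter_ne' Finset.univ a,
        Finset.sum_erase _ (by rw [hM.1 a]; ring), hu]
      simp only
      rw [Finset.mul_sum]
      apply Finset.sum_congr rfl
      intro j _
      ring
    have hk2 : kemeny G M = u i := by
      rw [hk]
      have : ∀ a, statPi G a * u a = statPi G a * u i := fun a => by rw [hconst a i]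
      rw [Finset.sum_congr rfl (fun a _ => this a), ← Finset.sum_mul, statPi_sum hc,
        one_mul]
    exact hk2.symm

lemma degree_ne_zero_of_ne (hG : G.Connected) {i t : V} (h : i ≠ t) : G.degree i ≠ 0 := by
  obtain ⟨p⟩ := hG.preconnected i t
  have hnil : ¬ p.Nil := SimpleGraph.Walk.not_nil_of_ne h
  have hadj := p.adj_snd hnil
  have : 0 < G.degree i := by rw [G.degree_pos_iff_exists_adj]; exact ⟨_, hadj⟩
  exact this.ne'

lemma edge_card_ne_zero_of_ne (hG : G.Connected) {i t : V} (h : i ≠ t) :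
    G.edgeFinset.card ≠ 0 := by
  intro hc
  apply degree_ne_zero_of_ne hG h
  have hsum := SimpleGraph.sum_degrees_eq_twice_card_edges G
  rw [hc, Nat.mul_zero] at hsum
  exact Finset.sum_eq_zero_iff.1 hsum i (Finset.mem_univ i)

lemma ind_sum_M {M : V → V → ℝ} (hM : IsMFPT G M) {v j : V} (hvj : v ≠ j) :
    ∑ k, (if G.Adj v k then (1:ℝ) else 0) * M k j = (G.degree v : ℝ) * (M v j - 1) := by
  have h1 : ∀ k, (if G.Adj v k then (1:ℝ) else 0) * M k j
      = (G.degree v : ℝ) * (transP G v k * M k j) := by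
    intro k
    rw [← mul_assoc, deg_mul_transP v k]
  rw [Finset.sum_congr rfl (fun k _ => h1 k), ← Finset.mul_sum]
  congr 1
  have := hM.2 v j hvj
  linarith

lemma ind_sum_one (v : V) : ∑ k, (if G.Adj v k then (1:ℝ) else 0) = (G.degree v : ℝ) := by
  have h : (G.degree v : ℕ) = ∑ k, if G.Adj v k then 1 else 0 := by
    rw [← SimpleGraph.card_neighborFinset_eq_degree]
    have h : G.neighborFinset v = Finset.univ.filter (G.Adj v) := by ext; simp
    rw [h, ← Finset.sum_filter]
    simp
  rw [h]
  push_cast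
  apply Finset.sum_congr rfl
  intro k _
  split <;> simp

lemma transP_sum_M {M : V → V → ℝ} (hM : IsMFPT G M) {i j : V} (hij : i ≠ j) :
    ∑ k, transP G i k * M k j = M i j - 1 := by
  have := hM.2 i j hij
  linarith


end RandomWalkLemmas

section ChainLemmas
variable {V1 V2 : Type*} [Fintype V1] [Fintype V2]
  (G1 : SimpleGraph V1) (G2 : SimpleGraph V2) (v1 : V1) (v2 : V2)

lemma chainTwo_adj_inl_inl (a b : V1) :
    (chainTwo G1 G2 v1 v2).Adj (Sum.inl a) (Sum.inl b) ↔ G1.Adj a b := Iff.rfl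

lemma chainTwo_adj_inr_inr (a b : V2) :
    (chainTwo G1 G2 v1 v2).Adj (Sum.inr a) (Sum.inr b) ↔ G2.Adj a b := Iff.rfl

lemma chainTwo_adj_inl_inr (a : V1) (b : V2) :
    (chainTwo G1 G2 v1 v2).Adj (Sum.inl a) (Sum.inr b) ↔ a = v1 ∧ b = v2 := Iff.rfl

lemma chainTwo_adj_inr_inl (a : V2) (b : V1) :
    (chainTwo G1 G2 v1 v2).Adj (Sum.inr a) (Sum.inl b) ↔ b = v1 ∧ a = v2 := Iff.rfl

lemma degree_eq_sum_ite {V : Type*} [Fintype V] (G : SimpleGraph V) (v : V) :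
    (G.degree v : ℕ) = ∑ k, if G.Adj v k then 1 else 0 := by
  rw [← SimpleGraph.card_neighborFinset_eq_degree]
  have h : G.neighborFinset v = Finset.univ.filter (G.Adj v) := by ext; simp
  rw [h, ← Finset.sum_filter]
  simp

lemma chainTwo_degree_inl (i : V1) :
    (chainTwo G1 G2 v1 v2).degree (Sum.inl i)
      = G1.degree i + (if i = v1 then 1 else 0) := by
  rw [degree_eq_sum_ite, Fintype.sum_sum_type, degree_eq_sum_ite]
  congr 1
  by_cases h : i = v1
  · subst h
    simp [chainTwo]
  · simp [chainTwo, h]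

lemma chainTwo_degree_inr (j : V2) :
    (chainTwo G1 G2 v1 v2).degree (Sum.inr j)
      = G2.degree j + (if j = v2 then 1 else 0) := by
  rw [degree_eq_sum_ite, Fintype.sum_sum_type, degree_eq_sum_ite]
  rw [add_comm]
  congr 1
  by_cases h : j = v2
  · subst h
    simp [chainTwo]
  · simp [chainTwo, h]

lemma chainTwo_card_edges :
    (chainTwo G1 G2 v1 v2).edgeFinset.card
      = G1.edgeFinset.card + G2.edgeFinset.card + 1 := by
  have h := SimpleGraph.sum_degrees_eq_twice_card_edges (chainTwo G1 G2 v1 v2)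
  rw [Fintype.sum_sum_type] at h
  have h1 : ∑ a : V1, (chainTwo G1 G2 v1 v2).degree (Sum.inl a)
      = 2 * G1.edgeFinset.card + 1 := by
    have : ∀ a : V1, (chainTwo G1 G2 v1 v2).degree (Sum.inl a)
        = G1.degree a + (if a = v1 then 1 else 0) :=
      chainTwo_degree_inl G1 G2 v1 v2
    rw [Finset.sum_congr rfl (fun a _ => this a), Finset.sum_add_distrib,
      SimpleGraph.sum_degrees_eq_twice_card_edges]
    congr 1
    rw [Finset.sum_ite_eq' Finset.univ v1 (fun _ => 1)]
    simp
  have h2 : ∑ b : V2, (chainTwo G1 G2 v1 v2).degree (Sum.inr b)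
      = 2 * G2.edgeFinset.card + 1 := by
    have : ∀ b : V2, (chainTwo G1 G2 v1 v2).degree (Sum.inr b)
        = G2.degree b + (if b = v2 then 1 else 0) :=
      chainTwo_degree_inr G1 G2 v1 v2
    rw [Finset.sum_congr rfl (fun b _ => this b), Finset.sum_add_distrib,
      SimpleGraph.sum_degrees_eq_twice_card_edges]
    congr 1
    rw [Finset.sum_ite_eq' Finset.univ v2 (fun _ => 1)]
    simp
  rw [h1, h2] at h
  omega

lemma chainTwo_connected (h1 : G1.Connected) (h2 : G2.Connected) :
    (chainTwo G1 G2 v1 v2).Connected := by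
  set GG := chainTwo G1 G2 v1 v2 with hGG
  have hbridge : GG.Reachable (Sum.inl v1) (Sum.inr v2) :=
    SimpleGraph.Adj.reachable (by exact ⟨rfl, rfl⟩)
  have hl : ∀ a : V1, GG.Reachable (Sum.inl a) (Sum.inl v1) :=
    fun a => (h1.preconnected a v1).map (⟨Sum.inl, fun h => h⟩ : G1 →g GG)
  have hr : ∀ b : V2, GG.Reachable (Sum.inr b) (Sum.inr v2) :=
    fun b => (h2.preconnected b v2).map (⟨Sum.inr, fun h => h⟩ : G2 →g GG)
  have hub : ∀ p : V1 ⊕ V2, GG.Reachable p (Sum.inl v1) := by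
    rintro (a | b)
    · exact hl a
    · exact (hr b).trans hbridge.symm
  rw [SimpleGraph.connected_iff]
  exact ⟨fun p q => (hub p).trans (hub q).symm, ⟨Sum.inl v1⟩⟩

end ChainLemmas

section ChainSums
variable {V1 V2 : Type*} [Fintype V1] [Fintype V2]
  (G1 : SimpleGraph V1) (G2 : SimpleGraph V2) (v1 : V1) (v2 : V2)

lemma chain_sum_inl_ne {i : V1} (hi : i ≠ v1) (f : V1 ⊕ V2 → ℝ) :
    ∑ k, transP (chainTwo G1 G2 v1 v2) (Sum.inl i) k * f k
      = ∑ k, transP G1 i k * f (Sum.inl k) := by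
  rw [Fintype.sum_sum_type]
  have hdeg : (chainTwo G1 G2 v1 v2).degree (Sum.inl i) = G1.degree i := by
    rw [chainTwo_degree_inl G1 G2 v1 v2 i, if_neg hi, Nat.add_zero]
  have h2 : ∀ b : V2, transP (chainTwo G1 G2 v1 v2) (Sum.inl i) (Sum.inr b) = 0 := by
    intro b
    unfold transP
    rw [if_neg]
    rintro ⟨h, -⟩
    exact hi h
  have hz : ∑ b : V2, transP (chainTwo G1 G2 v1 v2) (Sum.inl i) (Sum.inr b) * f (Sum.inr b)
      = 0 := by
    rw [Finset.sum_congr rfl (fun b _ => by rw [h2 b, zero_mul])]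
    exact Finset.sum_const_zero
  rw [hz, add_zero]
  apply Finset.sum_congr rfl
  intro k _
  unfold transP
  rw [hdeg]
  rfl

lemma chain_sum_inl_v1 (f : V1 ⊕ V2 → ℝ) :
    ∑ k, transP (chainTwo G1 G2 v1 v2) (Sum.inl v1) k * f k
      = (1 / ((G1.degree v1 : ℝ) + 1)) *
          ((∑ k, (if G1.Adj v1 k then (1:ℝ) else 0) * f (Sum.inl k)) + f (Sum.inr v2)) := by
  rw [Fintype.sum_sum_type]
  have hdeg : ((chainTwo G1 G2 v1 v2).degree (Sum.inl v1) : ℝ) = (G1.degree v1 : ℝ) + 1 := by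
    rw [chainTwo_degree_inl G1 G2 v1 v2 v1, if_pos rfl]
    push_cast; ring
  have h2 : ∀ b : V2, transP (chainTwo G1 G2 v1 v2) (Sum.inl v1) (Sum.inr b)
      = if b = v2 then 1 / ((G1.degree v1 : ℝ) + 1) else 0 := by
    intro b
    unfold transP
    rw [hdeg]
    by_cases hb : b = v2
    · rw [if_pos ⟨rfl, hb⟩, if_pos hb]
    · rw [if_neg (fun h => hb h.2), if_neg hb]
  have h3 : ∑ b : V2, transP (chainTwo G1 G2 v1 v2) (Sum.inl v1) (Sum.inr b) * f (Sum.inr b)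
      = 1 / ((G1.degree v1 : ℝ) + 1) * f (Sum.inr v2) := by
    rw [Finset.sum_congr rfl (fun b _ => by rw [h2 b, ite_mul, zero_mul])]
    rw [Finset.sum_ite_eq' Finset.univ v2 (fun b => 1 / ((G1.degree v1 : ℝ) + 1) * f (Sum.inr b))]
    simp
  rw [h3]
  have h4 : ∀ k : V1, transP (chainTwo G1 G2 v1 v2) (Sum.inl v1) (Sum.inl k) * f (Sum.inl k)
      = 1 / ((G1.degree v1 : ℝ) + 1) * ((if G1.Adj v1 k then (1:ℝ) else 0) * f (Sum.inl k)) := by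
    intro k
    unfold transP
    rw [hdeg]
    by_cases hk : G1.Adj v1 k
    · rw [if_pos (show (chainTwo G1 G2 v1 v2).Adj (Sum.inl v1) (Sum.inl k) from hk),
        if_pos hk]; ring
    · rw [if_neg (show ¬ (chainTwo G1 G2 v1 v2).Adj (Sum.inl v1) (Sum.inl k) from hk),
        if_neg hk]; ring
  rw [Finset.sum_congr rfl (fun k _ => h4 k), ← Finset.mul_sum]
  ring

lemma chain_sum_inr_ne {i : V2} (hi : i ≠ v2) (f : V1 ⊕ V2 → ℝ) :
    ∑ k, transP (chainTwo G1 G2 v1 v2) (Sum.inr i) k * f k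
      = ∑ k, transP G2 i k * f (Sum.inr k) := by
  rw [Fintype.sum_sum_type]
  have hdeg : (chainTwo G1 G2 v1 v2).degree (Sum.inr i) = G2.degree i := by
    rw [chainTwo_degree_inr G1 G2 v1 v2 i, if_neg hi, Nat.add_zero]
  have h2 : ∀ b : V1, transP (chainTwo G1 G2 v1 v2) (Sum.inr i) (Sum.inl b) = 0 := by
    intro b
    unfold transP
    rw [if_neg]
    rintro ⟨-, h⟩
    exact hi h
  have hz : ∑ b : V1, transP (chainTwo G1 G2 v1 v2) (Sum.inr i) (Sum.inl b) * f (Sum.inl b)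
      = 0 := by
    rw [Finset.sum_congr rfl (fun b _ => by rw [h2 b, zero_mul])]
    exact Finset.sum_const_zero
  rw [hz, zero_add]
  apply Finset.sum_congr rfl
  intro k _
  unfold transP
  rw [hdeg]
  rfl

lemma chain_sum_inr_v2 (f : V1 ⊕ V2 → ℝ) :
    ∑ k, transP (chainTwo G1 G2 v1 v2) (Sum.inr v2) k * f k
      = (1 / ((G2.degree v2 : ℝ) + 1)) *
          ((∑ k, (if G2.Adj v2 k then (1:ℝ) else 0) * f (Sum.inr k)) + f (Sum.inl v1)) := by
  rw [Fintype.sum_sum_type]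
  have hdeg : ((chainTwo G1 G2 v1 v2).degree (Sum.inr v2) : ℝ) = (G2.degree v2 : ℝ) + 1 := by
    rw [chainTwo_degree_inr G1 G2 v1 v2 v2, if_pos rfl]
    push_cast; ring
  have h2 : ∀ b : V1, transP (chainTwo G1 G2 v1 v2) (Sum.inr v2) (Sum.inl b)
      = if b = v1 then 1 / ((G2.degree v2 : ℝ) + 1) else 0 := by
    intro b
    unfold transP
    rw [hdeg]
    by_cases hb : b = v1
    · rw [if_pos ⟨hb, rfl⟩, if_pos hb]
    · rw [if_neg (fun h => hb h.1), if_neg hb]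
  have h3 : ∑ b : V1, transP (chainTwo G1 G2 v1 v2) (Sum.inr v2) (Sum.inl b) * f (Sum.inl b)
      = 1 / ((G2.degree v2 : ℝ) + 1) * f (Sum.inl v1) := by
    rw [Finset.sum_congr rfl (fun b _ => by rw [h2 b, ite_mul, zero_mul])]
    rw [Finset.sum_ite_eq' Finset.univ v1 (fun b => 1 / ((G2.degree v2 : ℝ) + 1) * f (Sum.inl b))]
    simp
  rw [h3]
  have h4 : ∀ k : V2, transP (chainTwo G1 G2 v1 v2) (Sum.inr v2) (Sum.inr k) * f (Sum.inr k)
      = 1 / ((G2.degree v2 : ℝ) + 1) * ((if G2.Adj v2 k then (1:ℝ) else 0) * f (Sum.inr k)) := by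
    intro k
    unfold transP
    rw [hdeg]
    by_cases hk : G2.Adj v2 k
    · rw [if_pos (show (chainTwo G1 G2 v1 v2).Adj (Sum.inr v2) (Sum.inr k) from hk),
        if_pos hk]; ring
    · rw [if_neg (show ¬ (chainTwo G1 G2 v1 v2).Adj (Sum.inr v2) (Sum.inr k) from hk),
        if_neg hk]; ring
  rw [Finset.sum_congr rfl (fun k _ => h4 k), ← Finset.mul_sum]
  ring

end ChainSums

/-- The `V1`-block of the chain MFPT matrix. -/
noncomputable def MLL {V1 V2 : Type*} [Fintype V1] [Fintype V2]
    (G1 : SimpleGraph V1) (G2 : SimpleGraph V2) (v1 : V1) (M1 : V1 → V1 → ℝ)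
    (i j : V1) : ℝ :=
  M1 i j + (((G2.edgeFinset.card : ℝ) + 1) / (G1.edgeFinset.card : ℝ))
    * (M1 i j + M1 j v1 - M1 i v1)

/-- The `V2`-block of the chain MFPT matrix. -/
noncomputable def MRR {V1 V2 : Type*} [Fintype V1] [Fintype V2]
    (G1 : SimpleGraph V1) (G2 : SimpleGraph V2) (v2 : V2) (M2 : V2 → V2 → ℝ)
    (i j : V2) : ℝ :=
  M2 i j + (((G1.edgeFinset.card : ℝ) + 1) / (G2.edgeFinset.card : ℝ))
    * (M2 i j + M2 j v2 - M2 i v2)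

/-- The explicit MFPT matrix of the chain of two graphs. -/
noncomputable def Mhat {V1 V2 : Type*} [Fintype V1] [Fintype V2]
    (G1 : SimpleGraph V1) (G2 : SimpleGraph V2) (v1 : V1) (v2 : V2)
    (M1 : V1 → V1 → ℝ) (M2 : V2 → V2 → ℝ) :
    V1 ⊕ V2 → V1 ⊕ V2 → ℝ
  | Sum.inl i, Sum.inl j => MLL G1 G2 v1 M1 i j
  | Sum.inr i, Sum.inr j => MRR G1 G2 v2 M2 i j
  | Sum.inl i, Sum.inr j =>
      M1 i v1 + (2 * (G1.edgeFinset.card : ℝ) + 1) + MRR G1 G2 v2 M2 v2 j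
  | Sum.inr i, Sum.inl j =>
      M2 i v2 + (2 * (G2.edgeFinset.card : ℝ) + 1) + MLL G1 G2 v1 M1 v1 j

section MhatMFPT
variable {V1 V2 : Type*} [Fintype V1] [Fintype V2]
  {G1 : SimpleGraph V1} {G2 : SimpleGraph V2} {v1 : V1} {v2 : V2}
  {M1 : V1 → V1 → ℝ} {M2 : V2 → V2 → ℝ}

lemma MLL_self (hM1 : IsMFPT G1 M1) (i : V1) : MLL G1 G2 v1 M1 i i = 0 := by
  unfold MLL
  rw [hM1.1]
  ring

lemma MRR_self (hM2 : IsMFPT G2 M2) (j : V2) : MRR G1 G2 v2 M2 j j = 0 := by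
  unfold MRR
  rw [hM2.1]
  ring

lemma MLL_to_v1 (hM1 : IsMFPT G1 M1) (i : V1) : MLL G1 G2 v1 M1 i v1 = M1 i v1 := by
  unfold MLL
  rw [hM1.1]
  ring

lemma MRR_to_v2 (hM2 : IsMFPT G2 M2) (j : V2) : MRR G1 G2 v2 M2 j v2 = M2 j v2 := by
  unfold MRR
  rw [hM2.1]
  ring

lemma Mhat_isMFPT (h1 : G1.Connected) (h2 : G2.Connected)
    (hM1 : IsMFPT G1 M1) (hM2 : IsMFPT G2 M2) :
    IsMFPT (chainTwo G1 G2 v1 v2) (Mhat G1 G2 v1 v2 M1 M2) := by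
  constructor
  · rintro (j | j)
    · exact MLL_self hM1 j
    · exact MRR_self hM2 j
  · rintro (i | i) (j | j) hne
    -- Case LL
    · have hij : i ≠ j := fun h => hne (congrArg Sum.inl h)
      show MLL G1 G2 v1 M1 i j = 1 + _
      by_cases hi : v1 = i
      · subst hi
        have hjv : v1 ≠ j := hij
        have hm1 : G1.edgeFinset.card ≠ 0 := edge_card_ne_zero_of_ne h1 hjv
        rw [chain_sum_inl_v1 G1 G2 v1 v2 (fun k => Mhat G1 G2 v1 v2 M1 M2 k (Sum.inl j))]
        have hS : ∑ k, (if G1.Adj v1 k then (1:ℝ) else 0) * Mhat G1 G2 v1 v2 M1 M2 (Sum.inl k) (Sum.inl j)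
            = (1 + ((G2.edgeFinset.card : ℝ) + 1) / (G1.edgeFinset.card : ℝ))
                * (∑ k, (if G1.Adj v1 k then (1:ℝ) else 0) * M1 k j)
              + ((((G2.edgeFinset.card : ℝ) + 1) / (G1.edgeFinset.card : ℝ)) * M1 j v1)
                * (∑ k, (if G1.Adj v1 k then (1:ℝ) else 0))
              - (((G2.edgeFinset.card : ℝ) + 1) / (G1.edgeFinset.card : ℝ))
                * (∑ k, (if G1.Adj v1 k then (1:ℝ) else 0) * M1 k v1) := by
          rw [Finset.mul_sum, Finset.mul_sum, Finset.mul_sum, ← Finset.sum_add_distrib,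
            ← Finset.sum_sub_distrib]
          apply Finset.sum_congr rfl
          intro k _
          show (if G1.Adj v1 k then (1:ℝ) else 0) * MLL G1 G2 v1 M1 k j = _
          unfold MLL
          ring
        rw [hS, ind_sum_M hM1 hjv, ind_sum_one v1, return_identity hM1 v1]
        show _ = 1 + 1 / (↑(G1.degree v1) + 1) * (_ + (M2 v2 v2 + (2 * (G2.edgeFinset.card : ℝ) + 1) + MLL G1 G2 v1 M1 v1 j))
        rw [hM2.1]
        unfold MLL
        rw [hM1.1]
        have hd1 : ((G1.degree v1 : ℝ) + 1) ≠ 0 := by positivity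
        have hm1' : (G1.edgeFinset.card : ℝ) ≠ 0 := Nat.cast_ne_zero.2 hm1
        set A1R := (G1.edgeFinset.card : ℝ) with hA1R
        set A2R := (G2.edgeFinset.card : ℝ) with hA2R
        set D1R := (G1.degree v1 : ℝ) with hD1R
        set D2R := (G2.degree v2 : ℝ) with hD2R
        field_simp
        ring
      · have hi' : i ≠ v1 := fun h => hi h.symm
        rw [chain_sum_inl_ne G1 G2 v1 v2 hi' (fun k => Mhat G1 G2 v1 v2 M1 M2 k (Sum.inl j))]
        have hd : G1.degree i ≠ 0 := degree_ne_zero_of_ne h1 hi'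
        have hS : ∑ k, transP G1 i k * Mhat G1 G2 v1 v2 M1 M2 (Sum.inl k) (Sum.inl j)
            = (1 + ((G2.edgeFinset.card : ℝ) + 1) / (G1.edgeFinset.card : ℝ))
                * (∑ k, transP G1 i k * M1 k j)
              + ((((G2.edgeFinset.card : ℝ) + 1) / (G1.edgeFinset.card : ℝ)) * M1 j v1)
                * (∑ k, transP G1 i k)
              - (((G2.edgeFinset.card : ℝ) + 1) / (G1.edgeFinset.card : ℝ))
                * (∑ k, transP G1 i k * M1 k v1) := by
          rw [Finset.mul_sum, Finset.mul_sum, Finset.mul_sum, ← Finset.sum_add_distrib,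
            ← Finset.sum_sub_distrib]
          apply Finset.sum_congr rfl
          intro k _
          show transP G1 i k * MLL G1 G2 v1 M1 k j = _
          unfold MLL
          ring
        rw [hS, transP_sum_M hM1 hij, transP_sum_M hM1 hi', sum_transP i hd]
        unfold MLL
        ring
    -- Case LR
    · show M1 i v1 + (2 * (G1.edgeFinset.card : ℝ) + 1) + MRR G1 G2 v2 M2 v2 j = 1 + _
      by_cases hi : v1 = i
      · subst hi
        rw [chain_sum_inl_v1 G1 G2 v1 v2 (fun k => Mhat G1 G2 v1 v2 M1 M2 k (Sum.inr j))]
        have hS : ∑ k, (if G1.Adj v1 k then (1:ℝ) else 0) * Mhat G1 G2 v1 v2 M1 M2 (Sum.inl k) (Sum.inr j)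
            = (∑ k, (if G1.Adj v1 k then (1:ℝ) else 0) * M1 k v1)
              + ((2 * (G1.edgeFinset.card : ℝ) + 1) + MRR G1 G2 v2 M2 v2 j)
                * (∑ k, (if G1.Adj v1 k then (1:ℝ) else 0)) := by
          rw [Finset.mul_sum, ← Finset.sum_add_distrib]
          apply Finset.sum_congr rfl
          intro k _
          show (if G1.Adj v1 k then (1:ℝ) else 0)
              * (M1 k v1 + (2 * (G1.edgeFinset.card : ℝ) + 1) + MRR G1 G2 v2 M2 v2 j) = _
          ring
        rw [hS, ind_sum_one v1, return_identity hM1 v1]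
        show _ = 1 + 1 / (↑(G1.degree v1) + 1) * (_ + MRR G1 G2 v2 M2 v2 j)
        rw [hM1.1]
        have hd1 : ((G1.degree v1 : ℝ) + 1) ≠ 0 := by positivity
        set A1R := (G1.edgeFinset.card : ℝ) with hA1R
        set A2R := (G2.edgeFinset.card : ℝ) with hA2R
        set D1R := (G1.degree v1 : ℝ) with hD1R
        set D2R := (G2.degree v2 : ℝ) with hD2R
        field_simp
        ring
      · have hi' : i ≠ v1 := fun h => hi h.symm
        rw [chain_sum_inl_ne G1 G2 v1 v2 hi' (fun k => Mhat G1 G2 v1 v2 M1 M2 k (Sum.inr j))]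
        have hd : G1.degree i ≠ 0 := degree_ne_zero_of_ne h1 hi'
        have hS : ∑ k, transP G1 i k * Mhat G1 G2 v1 v2 M1 M2 (Sum.inl k) (Sum.inr j)
            = (∑ k, transP G1 i k * M1 k v1)
              + ((2 * (G1.edgeFinset.card : ℝ) + 1) + MRR G1 G2 v2 M2 v2 j)
                * (∑ k, transP G1 i k) := by
          rw [Finset.mul_sum, ← Finset.sum_add_distrib]
          apply Finset.sum_congr rfl
          intro k _
          show transP G1 i k
              * (M1 k v1 + (2 * (G1.edgeFinset.card : ℝ) + 1) + MRR G1 G2 v2 M2 v2 j) = _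
          ring
        rw [hS, transP_sum_M hM1 hi', sum_transP i hd]
        ring
    -- Case RL
    · show M2 i v2 + (2 * (G2.edgeFinset.card : ℝ) + 1) + MLL G1 G2 v1 M1 v1 j = 1 + _
      by_cases hi : v2 = i
      · subst hi
        rw [chain_sum_inr_v2 G1 G2 v1 v2 (fun k => Mhat G1 G2 v1 v2 M1 M2 k (Sum.inl j))]
        have hS : ∑ k, (if G2.Adj v2 k then (1:ℝ) else 0) * Mhat G1 G2 v1 v2 M1 M2 (Sum.inr k) (Sum.inl j)
            = (∑ k, (if G2.Adj v2 k then (1:ℝ) else 0) * M2 k v2)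
              + ((2 * (G2.edgeFinset.card : ℝ) + 1) + MLL G1 G2 v1 M1 v1 j)
                * (∑ k, (if G2.Adj v2 k then (1:ℝ) else 0)) := by
          rw [Finset.mul_sum, ← Finset.sum_add_distrib]
          apply Finset.sum_congr rfl
          intro k _
          show (if G2.Adj v2 k then (1:ℝ) else 0)
              * (M2 k v2 + (2 * (G2.edgeFinset.card : ℝ) + 1) + MLL G1 G2 v1 M1 v1 j) = _
          ring
        rw [hS, ind_sum_one v2, return_identity hM2 v2]
        show _ = 1 + 1 / (↑(G2.degree v2) + 1) * (_ + MLL G1 G2 v1 M1 v1 j)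
        rw [hM2.1]
        have hd1 : ((G2.degree v2 : ℝ) + 1) ≠ 0 := by positivity
        set A1R := (G1.edgeFinset.card : ℝ) with hA1R
        set A2R := (G2.edgeFinset.card : ℝ) with hA2R
        set D1R := (G1.degree v1 : ℝ) with hD1R
        set D2R := (G2.degree v2 : ℝ) with hD2R
        field_simp
        ring
      · have hi' : i ≠ v2 := fun h => hi h.symm
        rw [chain_sum_inr_ne G1 G2 v1 v2 hi' (fun k => Mhat G1 G2 v1 v2 M1 M2 k (Sum.inl j))]
        have hd : G2.degree i ≠ 0 := degree_ne_zero_of_ne h2 hi'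
        have hS : ∑ k, transP G2 i k * Mhat G1 G2 v1 v2 M1 M2 (Sum.inr k) (Sum.inl j)
            = (∑ k, transP G2 i k * M2 k v2)
              + ((2 * (G2.edgeFinset.card : ℝ) + 1) + MLL G1 G2 v1 M1 v1 j)
                * (∑ k, transP G2 i k) := by
          rw [Finset.mul_sum, ← Finset.sum_add_distrib]
          apply Finset.sum_congr rfl
          intro k _
          show transP G2 i k
              * (M2 k v2 + (2 * (G2.edgeFinset.card : ℝ) + 1) + MLL G1 G2 v1 M1 v1 j) = _
          ring
        rw [hS, transP_sum_M hM2 hi', sum_transP i hd]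
        ring
    -- Case RR
    · have hij : i ≠ j := fun h => hne (congrArg Sum.inr h)
      show MRR G1 G2 v2 M2 i j = 1 + _
      by_cases hi : v2 = i
      · subst hi
        have hjv : v2 ≠ j := hij
        have hm2 : G2.edgeFinset.card ≠ 0 := edge_card_ne_zero_of_ne h2 hjv
        rw [chain_sum_inr_v2 G1 G2 v1 v2 (fun k => Mhat G1 G2 v1 v2 M1 M2 k (Sum.inr j))]
        have hS : ∑ k, (if G2.Adj v2 k then (1:ℝ) else 0) * Mhat G1 G2 v1 v2 M1 M2 (Sum.inr k) (Sum.inr j)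
            = (1 + ((G1.edgeFinset.card : ℝ) + 1) / (G2.edgeFinset.card : ℝ))
                * (∑ k, (if G2.Adj v2 k then (1:ℝ) else 0) * M2 k j)
              + ((((G1.edgeFinset.card : ℝ) + 1) / (G2.edgeFinset.card : ℝ)) * M2 j v2)
                * (∑ k, (if G2.Adj v2 k then (1:ℝ) else 0))
              - (((G1.edgeFinset.card : ℝ) + 1) / (G2.edgeFinset.card : ℝ))
                * (∑ k, (if G2.Adj v2 k then (1:ℝ) else 0) * M2 k v2) := by
          rw [Finset.mul_sum, Finset.mul_sum, Finset.mul_sum, ← Finset.sum_add_distrib,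
            ← Finset.sum_sub_distrib]
          apply Finset.sum_congr rfl
          intro k _
          show (if G2.Adj v2 k then (1:ℝ) else 0) * MRR G1 G2 v2 M2 k j = _
          unfold MRR
          ring
        rw [hS, ind_sum_M hM2 hjv, ind_sum_one v2, return_identity hM2 v2]
        show _ = 1 + 1 / (↑(G2.degree v2) + 1) * (_ + (M1 v1 v1 + (2 * (G1.edgeFinset.card : ℝ) + 1) + MRR G1 G2 v2 M2 v2 j))
        rw [hM1.1]
        unfold MRR
        rw [hM2.1]
        have hd1 : ((G2.degree v2 : ℝ) + 1) ≠ 0 := by positivity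
        have hm2' : (G2.edgeFinset.card : ℝ) ≠ 0 := Nat.cast_ne_zero.2 hm2
        set A1R := (G1.edgeFinset.card : ℝ) with hA1R
        set A2R := (G2.edgeFinset.card : ℝ) with hA2R
        set D1R := (G1.degree v1 : ℝ) with hD1R
        set D2R := (G2.degree v2 : ℝ) with hD2R
        field_simp
        ring
      · have hi' : i ≠ v2 := fun h => hi h.symm
        rw [chain_sum_inr_ne G1 G2 v1 v2 hi' (fun k => Mhat G1 G2 v1 v2 M1 M2 k (Sum.inr j))]
        have hd : G2.degree i ≠ 0 := degree_ne_zero_of_ne h2 hi'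
        have hS : ∑ k, transP G2 i k * Mhat G1 G2 v1 v2 M1 M2 (Sum.inr k) (Sum.inr j)
            = (1 + ((G1.edgeFinset.card : ℝ) + 1) / (G2.edgeFinset.card : ℝ))
                * (∑ k, transP G2 i k * M2 k j)
              + ((((G1.edgeFinset.card : ℝ) + 1) / (G2.edgeFinset.card : ℝ)) * M2 j v2)
                * (∑ k, transP G2 i k)
              - (((G1.edgeFinset.card : ℝ) + 1) / (G2.edgeFinset.card : ℝ))
                * (∑ k, transP G2 i k * M2 k v2) := by
          rw [Finset.mul_sum, Finset.mul_sum, Finset.mul_sum, ← Finset.sum_add_distrib,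
            ← Finset.sum_sub_distrib]
          apply Finset.sum_congr rfl
          intro k _
          show transP G2 i k * MRR G1 G2 v2 M2 k j = _
          unfold MRR
          ring
        rw [hS, transP_sum_M hM2 hij, transP_sum_M hM2 hi', sum_transP i hd]
        unfold MRR
        ring
end MhatMFPT


section SumLemmas
variable {V : Type*} [Fintype V] {G : SimpleGraph V} {M : V → V → ℝ}

lemma sum_lin (c1 c2 : ℝ) (f g : V → ℝ) :
    ∑ i, (c1 * f i + c2 * g i) = c1 * ∑ i, f i + c2 * ∑ i, g i := by
  rw [Finset.sum_add_distrib, ← Finset.mul_sum, ← Finset.mul_sum]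

lemma sum_lin3 (c1 c2 c3 : ℝ) (f g h : V → ℝ) :
    ∑ i, (c1 * f i + c2 * g i - c3 * h i)
      = c1 * ∑ i, f i + c2 * ∑ i, g i - c3 * ∑ i, h i := by
  rw [Finset.sum_sub_distrib, Finset.sum_add_distrib, ← Finset.mul_sum, ← Finset.mul_sum,
    ← Finset.mul_sum]

lemma sum_W (D : V → ℝ) (v : V) (F : V → ℝ) :
    ∑ i, F i * (D i + if i = v then (1:ℝ) else 0) = (∑ i, F i * D i) + F v := by
  have h : ∀ i, F i * (D i + if i = v then (1:ℝ) else 0)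
      = F i * D i + (if i = v then F i else 0) := by
    intro i; split <;> ring
  rw [Finset.sum_congr rfl (fun i _ => h i), Finset.sum_add_distrib,
    Finset.sum_ite_eq' Finset.univ v F]
  simp

lemma degree_zero_of_card (hc : G.edgeFinset.card = 0) (i : V) : G.degree i = 0 := by
  have hsum := SimpleGraph.sum_degrees_eq_twice_card_edges G
  rw [hc, Nat.mul_zero] at hsum
  exact Finset.sum_eq_zero_iff.1 hsum i (Finset.mem_univ i)

lemma statPi_mul (hc : G.edgeFinset.card ≠ 0) (i : V) :
    (G.degree i : ℝ) = 2 * G.edgeFinset.card * statPi G i := by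
  unfold statPi
  have h2 : (2 * (G.edgeFinset.card : ℝ)) ≠ 0 := by
    have : (G.edgeFinset.card : ℝ) ≠ 0 := Nat.cast_ne_zero.2 hc
    positivity
  rw [mul_div_assoc']
  rw [mul_comm (2 * (G.edgeFinset.card : ℝ)) (G.degree i : ℝ)]
  rw [mul_div_assoc, div_self h2, mul_one]

lemma acc_full (hM : IsMFPT G M) (v : V) :
    acc G M v = ∑ i, statPi G i * M i v := by
  unfold acc
  rw [Finset.filter_ne' Finset.univ v, Finset.sum_erase _ (by rw [hM.1 v]; ring)]

lemma kemeny_full (hM : IsMFPT G M) :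
    kemeny G M = ∑ i, ∑ j, statPi G i * M i j * statPi G j := by
  unfold kemeny
  apply Finset.sum_congr rfl
  intro i _
  rw [Finset.filter_ne' Finset.univ i, Finset.sum_erase _ (by rw [hM.1 i]; ring)]

lemma sum_degR : ∑ i, (G.degree i : ℝ) = 2 * G.edgeFinset.card := by
  rw [← Nat.cast_sum, SimpleGraph.sum_degrees_eq_twice_card_edges]
  push_cast; ring

lemma sum_M_deg_acc (hM : IsMFPT G M) (v : V) :
    ∑ i, M i v * (G.degree i : ℝ) = 2 * G.edgeFinset.card * acc G M v := by
  by_cases hc : G.edgeFinset.card = 0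
  · have h0 : ∀ i, (G.degree i : ℝ) = 0 := fun i => by
      rw [degree_zero_of_card hc i]; simp
    rw [Finset.sum_congr rfl (fun i _ => by rw [h0 i, mul_zero]), Finset.sum_const_zero, hc]
    push_cast; ring
  · rw [acc_full hM v, Finset.mul_sum]
    apply Finset.sum_congr rfl
    intro i _
    rw [statPi_mul hc i]
    ring

lemma sum_M_deg_kem (hG : G.Connected) (hM : IsMFPT G M) (v : V) :
    ∑ j, M v j * (G.degree j : ℝ) = 2 * G.edgeFinset.card * kemeny G M := by
  by_cases hc : G.edgeFinset.card = 0
  · have h0 : ∀ i, (G.degree i : ℝ) = 0 := fun i => by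
      rw [degree_zero_of_card hc i]; simp
    rw [Finset.sum_congr rfl (fun i _ => by rw [h0 i, mul_zero]), Finset.sum_const_zero, hc]
    push_cast; ring
  · rw [← random_target hG hM v, Finset.mul_sum]
    apply Finset.sum_congr rfl
    intro j _
    rw [statPi_mul hc j]
    ring

lemma sum_dd_kem (hG : G.Connected) (hM : IsMFPT G M) :
    ∑ i, (∑ j, M i j * (G.degree j : ℝ)) * (G.degree i : ℝ)
      = (2 * G.edgeFinset.card) * (2 * G.edgeFinset.card) * kemeny G M := by
  by_cases hc : G.edgeFinset.card = 0
  · have h0 : ∀ i, (G.degree i : ℝ) = 0 := fun i => by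
      rw [degree_zero_of_card hc i]; simp
    rw [Finset.sum_congr rfl (fun i _ => by rw [h0 i, mul_zero]), Finset.sum_const_zero, hc]
    push_cast; ring
  · rw [kemeny_full hM, Finset.mul_sum]
    apply Finset.sum_congr rfl
    intro i _
    rw [Finset.mul_sum, statPi_mul hc i, Finset.sum_mul]
    apply Finset.sum_congr rfl
    intro j _
    rw [statPi_mul hc j]
    ring

lemma kemeny_zero (hc : G.edgeFinset.card = 0) : kemeny G M = 0 := by
  have hz : ∀ i, statPi G i = 0 := by
    intro i; unfold statPi; rw [hc]; push_cast; simp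
  unfold kemeny
  simp [hz]

lemma acc_zero (hc : G.edgeFinset.card = 0) (v : V) : acc G M v = 0 := by
  have hz : ∀ i, statPi G i = 0 := by
    intro i; unfold statPi; rw [hc]; push_cast; simp
  unfold acc
  simp [hz]

end SumLemmas

section BlockLemmas
variable {V1 V2 : Type*} [Fintype V1] [Fintype V2]

lemma block_expand (W : V1 → ℝ) (A : V1 → V1 → ℝ) (B : V1 → ℝ) (r : ℝ) :
    ∑ i, ∑ i', W i * (A i i' + r * (A i i' + B i' - B i)) * W i'
      = (1 + r) * ∑ i, ((∑ i', A i i' * W i') * W i)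
        + r * ((∑ i', B i' * W i') * (∑ i, W i))
        - r * ((∑ i, B i * W i) * (∑ i', W i')) := by
  have h1 : ∀ i, ∑ i', W i * (A i i' + r * (A i i' + B i' - B i)) * W i'
      = ((1 + r) * W i) * (∑ i', A i i' * W i') + (r * W i) * (∑ i', B i' * W i')
        - (r * (∑ i', W i')) * (B i * W i) := by
    intro i
    rw [show ((1 + r) * W i) * (∑ i', A i i' * W i') + (r * W i) * (∑ i', B i' * W i')
        - (r * (∑ i', W i')) * (B i * W i)
      = ((1 + r) * W i) * (∑ i', A i i' * W i') + (r * W i) * (∑ i', B i' * W i')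
        - ((r * (B i * W i))) * (∑ i', W i') by ring]
    rw [← sum_lin3 ((1 + r) * W i) (r * W i) (r * (B i * W i))
      (fun i' => A i i' * W i') (fun i' => B i' * W i') W]
    apply Finset.sum_congr rfl
    intro i' _
    ring
  rw [Finset.sum_congr rfl (fun i _ => h1 i)]
  have h2 : ∀ i, ((1 + r) * W i) * (∑ i', A i i' * W i') + (r * W i) * (∑ i', B i' * W i')
        - (r * (∑ i', W i')) * (B i * W i)
      = (1 + r) * ((∑ i', A i i' * W i') * W i)
        + (r * (∑ i', B i' * W i')) * W i
        - (r * (∑ i', W i')) * (B i * W i) := fun i => by ring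
  rw [Finset.sum_congr rfl (fun i _ => h2 i),
    sum_lin3 (1 + r) (r * _) (r * _) (fun i => (∑ i', A i i' * W i') * W i) W
      (fun i => B i * W i)]
  ring

lemma cross_expand (W1 : V1 → ℝ) (W2 : V2 → ℝ) (F : V1 → ℝ) (c : ℝ) (H : V2 → ℝ) :
    ∑ i, ∑ j, W1 i * (F i + c + H j) * W2 j
      = (∑ i, F i * W1 i) * (∑ j, W2 j) + c * ((∑ i, W1 i) * (∑ j, W2 j))
        + (∑ i, W1 i) * (∑ j, H j * W2 j) := by
  have h1 : ∀ i, ∑ j, W1 i * (F i + c + H j) * W2 j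
      = ((F i * W1 i + c * W1 i) * (∑ j, W2 j) + W1 i * (∑ j, H j * W2 j)) := by
    intro i
    rw [show ((F i * W1 i + c * W1 i) * (∑ j, W2 j) + W1 i * (∑ j, H j * W2 j))
      = (F i * W1 i + c * W1 i) * (∑ j, W2 j) + W1 i * (∑ j, H j * W2 j) by ring]
    rw [← sum_lin (F i * W1 i + c * W1 i) (W1 i) W2 (fun j => H j * W2 j)]
    apply Finset.sum_congr rfl
    intro j _
    ring
  rw [Finset.sum_congr rfl (fun i _ => h1 i)]
  have h2 : ∀ i, ((F i * W1 i + c * W1 i) * (∑ j, W2 j) + W1 i * (∑ j, H j * W2 j))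
      = ((∑ j, W2 j)) * (F i * W1 i + c * W1 i) + ((∑ j, H j * W2 j)) * W1 i :=
    fun i => by ring
  rw [Finset.sum_congr rfl (fun i _ => h2 i),
    sum_lin (∑ j, W2 j) (∑ j, H j * W2 j) (fun i => F i * W1 i + c * W1 i) W1,
    Finset.sum_add_distrib, ← Finset.mul_sum]
  ring
end BlockLemmas


set_option maxHeartbeats 2000000 in
lemma final_identity (a b K1 K2 A1 A2 : ℝ) (ha0 : 0 ≤ a) (hb0 : 0 ≤ b)
    (hK1 : a = 0 → K1 = 0) (hA1 : a = 0 → A1 = 0)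
    (hK2 : b = 0 → K2 = 0) (hA2 : b = 0 → A2 = 0) :
    (((1 + ((b + 1) / a)) * ((((2 * a) * (2 * a) * K1 + 2 * a * A1) + (2 * a * K1 + 0))) + ((b + 1) / a) * ((2 * a * A1) * (2 * a + 1)) - ((b + 1) / a) * ((2 * a * A1) * (2 * a + 1))) + ((2 * a * A1) * (2 * b + 1) + (2 * a + 1) * ((2 * a + 1) * (2 * b + 1)) + (2 * a + 1) * ((1 + ((a + 1) / b)) * (2 * b * K2) + ((a + 1) / b) * (2 * b * A2))) + (((2 * b * A2) * (2 * a + 1) + (2 * b + 1) * ((2 * b + 1) * (2 * a + 1)) + (2 * b + 1) * ((1 + ((b + 1) / a)) * (2 * a * K1) + ((b + 1) / a) * (2 * a * A1))) + ((1 + ((a + 1) / b)) * ((((2 * b) * (2 * b) * K2 + 2 * b * A2) + (2 * b * K2 + 0))) + ((a + 1) / b) * ((2 * b * A2) * (2 * b + 1)) - ((a + 1) / b) * ((2 * b * A2) * (2 * b + 1)))))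
        / ((2 * (a + b + 1)) * (2 * (a + b + 1)))
      = K1 + K2 + (b + 1) / (a + b + 1) * A1 + (a + 1) / (a + b + 1) * A2
        + (2 * a + 1) * (2 * b + 1) / (2 * (a + b + 1)) := by
  by_cases ha : a = 0
  · subst ha
    rw [hK1 rfl, hA1 rfl]
    by_cases hb : b = 0
    · subst hb
      rw [hK2 rfl, hA2 rfl]
      norm_num
    · have hb1 : b + 1 ≠ 0 := by positivity
      simp only [zero_add]
      field_simp [hb, hb1]
      ring
  · have ha1 : a + 1 ≠ 0 := by positivity
    by_cases hb : b = 0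
    · subst hb
      rw [hK2 rfl, hA2 rfl]
      simp only [add_zero]
      field_simp [ha, ha1]
      ring
    · have hb1 : b + 1 ≠ 0 := by positivity
      have ham : a + b + 1 ≠ 0 := by positivity
      field_simp [ha, hb, ham]
      ring

/-- Kemeny's constant of a graph with a bridge:
`κ(G) = κ(G1) + κ(G2) + ((m2+1)/m)·α_{G1}(v1) + ((m1+1)/m)·α_{G2}(v2)
        + (2m1+1)(2m2+1)/(2m)`. -/
theorem kemeny_chainTwo {V1 V2 : Type*} [Fintype V1] [Fintype V2]
    (G1 : SimpleGraph V1) (G2 : SimpleGraph V2) (v1 : V1) (v2 : V2)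
    (h1 : G1.Connected) (h2 : G2.Connected)
    (M : (V1 ⊕ V2) → (V1 ⊕ V2) → ℝ) (M1 : V1 → V1 → ℝ) (M2 : V2 → V2 → ℝ)
    (hM : IsMFPT (chainTwo G1 G2 v1 v2) M) (hM1 : IsMFPT G1 M1) (hM2 : IsMFPT G2 M2)
    (m1 m2 m : ℕ) (hm1 : m1 = G1.edgeFinset.card) (hm2 : m2 = G2.edgeFinset.card)
    (hm : m = m1 + m2 + 1) :
    kemeny (chainTwo G1 G2 v1 v2) M =
      kemeny G1 M1 + kemeny G2 M2 +
      (((m2 : ℝ) + 1) / (m : ℝ)) * acc G1 M1 v1 +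
      (((m1 : ℝ) + 1) / (m : ℝ)) * acc G2 M2 v2 +
      (2 * (m1 : ℝ) + 1) * (2 * (m2 : ℝ) + 1) / (2 * (m : ℝ)) := by
  subst hm1
  subst hm2
  subst hm
  have hGc : (chainTwo G1 G2 v1 v2).Connected := chainTwo_connected G1 G2 v1 v2 h1 h2
  have hMFPT : IsMFPT (chainTwo G1 G2 v1 v2) (Mhat G1 G2 v1 v2 M1 M2) := Mhat_isMFPT h1 h2 hM1 hM2
  have hMeq : M = (Mhat G1 G2 v1 v2 M1 M2) := mfpt_unique hGc hM hMFPT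
  subst hMeq
  have hcardR : (((chainTwo G1 G2 v1 v2).edgeFinset.card : ℕ) : ℝ) = ((G1.edgeFinset.card : ℝ)) + ((G2.edgeFinset.card : ℝ)) + 1 := by
    rw [chainTwo_card_edges]
    push_cast
    ring
  have hWl : ∀ i : V1, (((chainTwo G1 G2 v1 v2).degree (Sum.inl i) : ℝ)) = ((G1.degree i : ℝ) + if i = v1 then (1:ℝ) else 0) := by
    intro i
    rw [chainTwo_degree_inl G1 G2 v1 v2 i]
    by_cases h : i = v1 <;> simp [h]
  have hWr : ∀ j : V2, (((chainTwo G1 G2 v1 v2).degree (Sum.inr j) : ℝ)) = ((G2.degree j : ℝ) + if j = v2 then (1:ℝ) else 0) := by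
    intro j
    rw [chainTwo_degree_inr G1 G2 v1 v2 j]
    by_cases h : j = v2 <;> simp [h]
  have hfull : kemeny (chainTwo G1 G2 v1 v2) (Mhat G1 G2 v1 v2 M1 M2)
      = (∑ p, ∑ q, (((chainTwo G1 G2 v1 v2).degree (p) : ℝ)) * (Mhat G1 G2 v1 v2 M1 M2) p q * (((chainTwo G1 G2 v1 v2).degree (q) : ℝ)))
        / ((2 * (((G1.edgeFinset.card : ℝ)) + ((G2.edgeFinset.card : ℝ)) + 1)) * (2 * (((G1.edgeFinset.card : ℝ)) + ((G2.edgeFinset.card : ℝ)) + 1))) := by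
    rw [kemeny_full hMFPT, Finset.sum_div]
    apply Finset.sum_congr rfl
    intro p _
    rw [Finset.sum_div]
    apply Finset.sum_congr rfl
    intro q _
    unfold statPi
    rw [hcardR]
    have hne : (2 * (((G1.edgeFinset.card : ℝ)) + ((G2.edgeFinset.card : ℝ)) + 1)) ≠ 0 := by
      positivity
    field_simp
  -- side sums for G1
  have hsumW1 : ∑ i, ((G1.degree i : ℝ) + if i = v1 then (1:ℝ) else 0) = 2 * ((G1.edgeFinset.card : ℝ)) + 1 := by
    rw [Finset.sum_add_distrib, Finset.sum_ite_eq' Finset.univ v1 (fun _ => (1:ℝ)), sum_degR]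
    simp
  have hBW1 : ∑ i, M1 i v1 * ((G1.degree i : ℝ) + if i = v1 then (1:ℝ) else 0) = 2 * ((G1.edgeFinset.card : ℝ)) * (acc G1 M1 v1) := by
    rw [sum_W (fun i => (G1.degree i : ℝ)) v1 (fun i => M1 i v1),
      sum_M_deg_acc hM1 v1, hM1.1]
    ring
  have hT1 : ∑ i, (∑ i', M1 i i' * ((G1.degree i' : ℝ) + if i' = v1 then (1:ℝ) else 0)) * ((G1.degree i : ℝ) + if i = v1 then (1:ℝ) else 0)
      = (((2 * ((G1.edgeFinset.card : ℝ))) * (2 * ((G1.edgeFinset.card : ℝ))) * (kemeny G1 M1) + 2 * ((G1.edgeFinset.card : ℝ)) * (acc G1 M1 v1)) + (2 * ((G1.edgeFinset.card : ℝ)) * (kemeny G1 M1) + 0)) := by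
    have hin : ∀ i, (∑ i', M1 i i' * ((G1.degree i' : ℝ) + if i' = v1 then (1:ℝ) else 0))
        = (∑ i', M1 i i' * (G1.degree i' : ℝ)) + M1 i v1 :=
      fun i => sum_W (fun i' => (G1.degree i' : ℝ)) v1 (M1 i)
    rw [Finset.sum_congr rfl (fun i _ => by rw [hin i]),
      sum_W (fun i => (G1.degree i : ℝ)) v1
        (fun i => (∑ i', M1 i i' * (G1.degree i' : ℝ)) + M1 i v1)]
    have hexp : ∀ i, ((∑ i', M1 i i' * (G1.degree i' : ℝ)) + M1 i v1) * (G1.degree i : ℝ)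
        = (∑ i', M1 i i' * (G1.degree i' : ℝ)) * (G1.degree i : ℝ)
          + M1 i v1 * (G1.degree i : ℝ) := fun i => by ring
    rw [Finset.sum_congr rfl (fun i _ => hexp i), Finset.sum_add_distrib,
      sum_dd_kem h1 hM1, sum_M_deg_acc hM1 v1, sum_M_deg_kem h1 hM1 v1, hM1.1]
  -- side sums for G2
  have hsumW2 : ∑ j, ((G2.degree j : ℝ) + if j = v2 then (1:ℝ) else 0) = 2 * ((G2.edgeFinset.card : ℝ)) + 1 := by
    rw [Finset.sum_add_distrib, Finset.sum_ite_eq' Finset.univ v2 (fun _ => (1:ℝ)), sum_degR]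
    simp
  have hBW2 : ∑ j, M2 j v2 * ((G2.degree j : ℝ) + if j = v2 then (1:ℝ) else 0) = 2 * ((G2.edgeFinset.card : ℝ)) * (acc G2 M2 v2) := by
    rw [sum_W (fun j => (G2.degree j : ℝ)) v2 (fun j => M2 j v2),
      sum_M_deg_acc hM2 v2, hM2.1]
    ring
  have hT2 : ∑ j, (∑ j', M2 j j' * ((G2.degree j' : ℝ) + if j' = v2 then (1:ℝ) else 0)) * ((G2.degree j : ℝ) + if j = v2 then (1:ℝ) else 0)
      = (((2 * ((G2.edgeFinset.card : ℝ))) * (2 * ((G2.edgeFinset.card : ℝ))) * (kemeny G2 M2) + 2 * ((G2.edgeFinset.card : ℝ)) * (acc G2 M2 v2)) + (2 * ((G2.edgeFinset.card : ℝ)) * (kemeny G2 M2) + 0)) := by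
    have hin : ∀ j, (∑ j', M2 j j' * ((G2.degree j' : ℝ) + if j' = v2 then (1:ℝ) else 0))
        = (∑ j', M2 j j' * (G2.degree j' : ℝ)) + M2 j v2 :=
      fun j => sum_W (fun j' => (G2.degree j' : ℝ)) v2 (M2 j)
    rw [Finset.sum_congr rfl (fun j _ => by rw [hin j]),
      sum_W (fun j => (G2.degree j : ℝ)) v2
        (fun j => (∑ j', M2 j j' * (G2.degree j' : ℝ)) + M2 j v2)]
    have hexp : ∀ j, ((∑ j', M2 j j' * (G2.degree j' : ℝ)) + M2 j v2) * (G2.degree j : ℝ)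
        = (∑ j', M2 j j' * (G2.degree j' : ℝ)) * (G2.degree j : ℝ)
          + M2 j v2 * (G2.degree j : ℝ) := fun j => by ring
    rw [Finset.sum_congr rfl (fun j _ => hexp j), Finset.sum_add_distrib,
      sum_dd_kem h2 hM2, sum_M_deg_acc hM2 v2, sum_M_deg_kem h2 hM2 v2, hM2.1]
  -- row sums of the bridge blocks
  have hrow2 : ∑ j, (MRR G1 G2 v2 M2 v2 j) * ((G2.degree j : ℝ) + if j = v2 then (1:ℝ) else 0)
      = (1 + ((((G1.edgeFinset.card : ℝ)) + 1) / ((G2.edgeFinset.card : ℝ)))) * (2 * ((G2.edgeFinset.card : ℝ)) * (kemeny G2 M2)) + ((((G1.edgeFinset.card : ℝ)) + 1) / ((G2.edgeFinset.card : ℝ))) * (2 * ((G2.edgeFinset.card : ℝ)) * (acc G2 M2 v2)) := by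
    have hMRRexp : ∀ j, MRR G1 G2 v2 M2 v2 j * ((G2.degree j : ℝ) + if j = v2 then (1:ℝ) else 0)
        = (1 + ((((G1.edgeFinset.card : ℝ)) + 1) / ((G2.edgeFinset.card : ℝ)))) * (M2 v2 j * ((G2.degree j : ℝ) + if j = v2 then (1:ℝ) else 0)) + ((((G1.edgeFinset.card : ℝ)) + 1) / ((G2.edgeFinset.card : ℝ))) * (M2 j v2 * ((G2.degree j : ℝ) + if j = v2 then (1:ℝ) else 0)) := by
      intro j
      unfold MRR
      rw [hM2.1]
      ring
    rw [Finset.sum_congr rfl (fun j _ => hMRRexp j),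
      sum_lin (1 + ((((G1.edgeFinset.card : ℝ)) + 1) / ((G2.edgeFinset.card : ℝ)))) ((((G1.edgeFinset.card : ℝ)) + 1) / ((G2.edgeFinset.card : ℝ))) (fun j => M2 v2 j * ((G2.degree j : ℝ) + if j = v2 then (1:ℝ) else 0)) (fun j => M2 j v2 * ((G2.degree j : ℝ) + if j = v2 then (1:ℝ) else 0)),
      sum_W (fun j => (G2.degree j : ℝ)) v2 (M2 v2), hBW2,
      sum_M_deg_kem h2 hM2 v2, hM2.1, add_zero]
  have hrow1 : ∑ i, (MLL G1 G2 v1 M1 v1 i) * ((G1.degree i : ℝ) + if i = v1 then (1:ℝ) else 0)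
      = (1 + ((((G2.edgeFinset.card : ℝ)) + 1) / ((G1.edgeFinset.card : ℝ)))) * (2 * ((G1.edgeFinset.card : ℝ)) * (kemeny G1 M1)) + ((((G2.edgeFinset.card : ℝ)) + 1) / ((G1.edgeFinset.card : ℝ))) * (2 * ((G1.edgeFinset.card : ℝ)) * (acc G1 M1 v1)) := by
    have hMLLexp : ∀ i, MLL G1 G2 v1 M1 v1 i * ((G1.degree i : ℝ) + if i = v1 then (1:ℝ) else 0)
        = (1 + ((((G2.edgeFinset.card : ℝ)) + 1) / ((G1.edgeFinset.card : ℝ)))) * (M1 v1 i * ((G1.degree i : ℝ) + if i = v1 then (1:ℝ) else 0)) + ((((G2.edgeFinset.card : ℝ)) + 1) / ((G1.edgeFinset.card : ℝ))) * (M1 i v1 * ((G1.degree i : ℝ) + if i = v1 then (1:ℝ) else 0)) := by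
      intro i
      unfold MLL
      rw [hM1.1]
      ring
    rw [Finset.sum_congr rfl (fun i _ => hMLLexp i),
      sum_lin (1 + ((((G2.edgeFinset.card : ℝ)) + 1) / ((G1.edgeFinset.card : ℝ)))) ((((G2.edgeFinset.card : ℝ)) + 1) / ((G1.edgeFinset.card : ℝ))) (fun i => M1 v1 i * ((G1.degree i : ℝ) + if i = v1 then (1:ℝ) else 0)) (fun i => M1 i v1 * ((G1.degree i : ℝ) + if i = v1 then (1:ℝ) else 0)),
      sum_W (fun i => (G1.degree i : ℝ)) v1 (M1 v1), hBW1,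
      sum_M_deg_kem h1 hM1 v1, hM1.1, add_zero]
  -- the four blocks
  have hBll : ∑ i, ∑ i', (((chainTwo G1 G2 v1 v2).degree (Sum.inl i) : ℝ)) * (Mhat G1 G2 v1 v2 M1 M2) (Sum.inl i) (Sum.inl i') * (((chainTwo G1 G2 v1 v2).degree (Sum.inl i') : ℝ))
      = (1 + ((((G2.edgeFinset.card : ℝ)) + 1) / ((G1.edgeFinset.card : ℝ)))) * ((((2 * ((G1.edgeFinset.card : ℝ))) * (2 * ((G1.edgeFinset.card : ℝ))) * (kemeny G1 M1) + 2 * ((G1.edgeFinset.card : ℝ)) * (acc G1 M1 v1)) + (2 * ((G1.edgeFinset.card : ℝ)) * (kemeny G1 M1) + 0))) + ((((G2.edgeFinset.card : ℝ)) + 1) / ((G1.edgeFinset.card : ℝ))) * ((2 * ((G1.edgeFinset.card : ℝ)) * (acc G1 M1 v1)) * (2 * ((G1.edgeFinset.card : ℝ)) + 1)) - ((((G2.edgeFinset.card : ℝ)) + 1) / ((G1.edgeFinset.card : ℝ))) * ((2 * ((G1.edgeFinset.card : ℝ)) * (acc G1 M1 v1)) * (2 * ((G1.edgeFinset.card : ℝ))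 + 1)) := by
    have e1 : ∑ i, ∑ i', (((chainTwo G1 G2 v1 v2).degree (Sum.inl i) : ℝ)) * (Mhat G1 G2 v1 v2 M1 M2) (Sum.inl i) (Sum.inl i') * (((chainTwo G1 G2 v1 v2).degree (Sum.inl i') : ℝ))
        = ∑ i, ∑ i', ((G1.degree i : ℝ) + if i = v1 then (1:ℝ) else 0) * ((fun i i' => M1 i i') i i'
            + ((((G2.edgeFinset.card : ℝ)) + 1) / ((G1.edgeFinset.card : ℝ))) * ((fun i i' => M1 i i') i i' + (fun i => M1 i v1) i'
              - (fun i => M1 i v1) i)) * ((G1.degree i' : ℝ) + if i' = v1 then (1:ℝ) else 0) := by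
      apply Finset.sum_congr rfl
      intro i _
      apply Finset.sum_congr rfl
      intro i' _
      rw [hWl i, hWl i']
      rfl
    rw [e1, block_expand (fun i => ((G1.degree i : ℝ) + if i = v1 then (1:ℝ) else 0)) (fun i i' => M1 i i') (fun i => M1 i v1) ((((G2.edgeFinset.card : ℝ)) + 1) / ((G1.edgeFinset.card : ℝ))),
      hT1, hBW1, hsumW1]
  have hBrr : ∑ j, ∑ j', (((chainTwo G1 G2 v1 v2).degree (Sum.inr j) : ℝ)) * (Mhat G1 G2 v1 v2 M1 M2) (Sum.inr j) (Sum.inr j') * (((chainTwo G1 G2 v1 v2).degree (Sum.inr j') : ℝ))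
      = (1 + ((((G1.edgeFinset.card : ℝ)) + 1) / ((G2.edgeFinset.card : ℝ)))) * ((((2 * ((G2.edgeFinset.card : ℝ))) * (2 * ((G2.edgeFinset.card : ℝ))) * (kemeny G2 M2) + 2 * ((G2.edgeFinset.card : ℝ)) * (acc G2 M2 v2)) + (2 * ((G2.edgeFinset.card : ℝ)) * (kemeny G2 M2) + 0))) + ((((G1.edgeFinset.card : ℝ)) + 1) / ((G2.edgeFinset.card : ℝ))) * ((2 * ((G2.edgeFinset.card : ℝ)) * (acc G2 M2 v2)) * (2 * ((G2.edgeFinset.card : ℝ)) + 1)) - ((((G1.edgeFinset.card : ℝ)) + 1) / ((G2.edgeFinset.card : ℝ))) * ((2 * ((G2.edgeFinset.card : ℝ)) * (acc G2 M2 v2)) * (2 * ((G2.edgeFinset.card : ℝ)) + 1)) := by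
    have e1 : ∑ j, ∑ j', (((chainTwo G1 G2 v1 v2).degree (Sum.inr j) : ℝ)) * (Mhat G1 G2 v1 v2 M1 M2) (Sum.inr j) (Sum.inr j') * (((chainTwo G1 G2 v1 v2).degree (Sum.inr j') : ℝ))
        = ∑ j, ∑ j', ((G2.degree j : ℝ) + if j = v2 then (1:ℝ) else 0) * ((fun j j' => M2 j j') j j'
            + ((((G1.edgeFinset.card : ℝ)) + 1) / ((G2.edgeFinset.card : ℝ))) * ((fun j j' => M2 j j') j j' + (fun j => M2 j v2) j'
              - (fun j => M2 j v2) j)) * ((G2.degree j' : ℝ) + if j' = v2 then (1:ℝ) else 0) := by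
      apply Finset.sum_congr rfl
      intro j _
      apply Finset.sum_congr rfl
      intro j' _
      rw [hWr j, hWr j']
      rfl
    rw [e1, block_expand (fun j => ((G2.degree j : ℝ) + if j = v2 then (1:ℝ) else 0)) (fun j j' => M2 j j') (fun j => M2 j v2) ((((G1.edgeFinset.card : ℝ)) + 1) / ((G2.edgeFinset.card : ℝ))),
      hT2, hBW2, hsumW2]
  have hBlr : ∑ i, ∑ j, (((chainTwo G1 G2 v1 v2).degree (Sum.inl i) : ℝ)) * (Mhat G1 G2 v1 v2 M1 M2) (Sum.inl i) (Sum.inr j) * (((chainTwo G1 G2 v1 v2).degree (Sum.inr j) : ℝ))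
      = (2 * ((G1.edgeFinset.card : ℝ)) * (acc G1 M1 v1)) * (2 * ((G2.edgeFinset.card : ℝ)) + 1) + (2 * ((G1.edgeFinset.card : ℝ)) + 1) * ((2 * ((G1.edgeFinset.card : ℝ)) + 1) * (2 * ((G2.edgeFinset.card : ℝ)) + 1)) + (2 * ((G1.edgeFinset.card : ℝ)) + 1) * ((1 + ((((G1.edgeFinset.card : ℝ)) + 1) / ((G2.edgeFinset.card : ℝ)))) * (2 * ((G2.edgeFinset.card : ℝ)) * (kemeny G2 M2)) + ((((G1.edgeFinset.card : ℝ)) + 1) / ((G2.edgeFinset.card : ℝ))) * (2 * ((G2.edgeFinset.card : ℝ)) * (acc G2 M2 v2))) := by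
    have e1 : ∑ i, ∑ j, (((chainTwo G1 G2 v1 v2).degree (Sum.inl i) : ℝ)) * (Mhat G1 G2 v1 v2 M1 M2) (Sum.inl i) (Sum.inr j) * (((chainTwo G1 G2 v1 v2).degree (Sum.inr j) : ℝ))
        = ∑ i, ∑ j, ((G1.degree i : ℝ) + if i = v1 then (1:ℝ) else 0) * ((fun i => M1 i v1) i + (2 * ((G1.edgeFinset.card : ℝ)) + 1)
            + (fun j => MRR G1 G2 v2 M2 v2 j) j) * ((G2.degree j : ℝ) + if j = v2 then (1:ℝ) else 0) := by
      apply Finset.sum_congr rfl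
      intro i _
      apply Finset.sum_congr rfl
      intro j _
      rw [hWl i, hWr j]
      rfl
    rw [e1, cross_expand (fun i => ((G1.degree i : ℝ) + if i = v1 then (1:ℝ) else 0)) (fun j => ((G2.degree j : ℝ) + if j = v2 then (1:ℝ) else 0)) (fun i => M1 i v1)
      (2 * ((G1.edgeFinset.card : ℝ)) + 1) (fun j => MRR G1 G2 v2 M2 v2 j), hBW1, hsumW1, hsumW2, hrow2]
  have hBrl : ∑ j, ∑ i, (((chainTwo G1 G2 v1 v2).degree (Sum.inr j) : ℝ)) * (Mhat G1 G2 v1 v2 M1 M2) (Sum.inr j) (Sum.inl i) * (((chainTwo G1 G2 v1 v2).degree (Sum.inl i) : ℝ))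
      = (2 * ((G2.edgeFinset.card : ℝ)) * (acc G2 M2 v2)) * (2 * ((G1.edgeFinset.card : ℝ)) + 1) + (2 * ((G2.edgeFinset.card : ℝ)) + 1) * ((2 * ((G2.edgeFinset.card : ℝ)) + 1) * (2 * ((G1.edgeFinset.card : ℝ)) + 1)) + (2 * ((G2.edgeFinset.card : ℝ)) + 1) * ((1 + ((((G2.edgeFinset.card : ℝ)) + 1) / ((G1.edgeFinset.card : ℝ)))) * (2 * ((G1.edgeFinset.card : ℝ)) * (kemeny G1 M1)) + ((((G2.edgeFinset.card : ℝ)) + 1) / ((G1.edgeFinset.card : ℝ))) * (2 * ((G1.edgeFinset.card : ℝ)) * (acc G1 M1 v1))) := by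
    have e1 : ∑ j, ∑ i, (((chainTwo G1 G2 v1 v2).degree (Sum.inr j) : ℝ)) * (Mhat G1 G2 v1 v2 M1 M2) (Sum.inr j) (Sum.inl i) * (((chainTwo G1 G2 v1 v2).degree (Sum.inl i) : ℝ))
        = ∑ j, ∑ i, ((G2.degree j : ℝ) + if j = v2 then (1:ℝ) else 0) * ((fun j => M2 j v2) j + (2 * ((G2.edgeFinset.card : ℝ)) + 1)
            + (fun i => MLL G1 G2 v1 M1 v1 i) i) * ((G1.degree i : ℝ) + if i = v1 then (1:ℝ) else 0) := by
      apply Finset.sum_congr rfl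
      intro j _
      apply Finset.sum_congr rfl
      intro i _
      rw [hWr j, hWl i]
      rfl
    rw [e1, cross_expand (fun j => ((G2.degree j : ℝ) + if j = v2 then (1:ℝ) else 0)) (fun i => ((G1.degree i : ℝ) + if i = v1 then (1:ℝ) else 0)) (fun j => M2 j v2)
      (2 * ((G2.edgeFinset.card : ℝ)) + 1) (fun i => MLL G1 G2 v1 M1 v1 i), hBW2, hsumW2, hsumW1, hrow1]
  have hnum : (∑ p, ∑ q, (((chainTwo G1 G2 v1 v2).degree (p) : ℝ)) * (Mhat G1 G2 v1 v2 M1 M2) p q * (((chainTwo G1 G2 v1 v2).degree (q) : ℝ)))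
      = ((1 + ((((G2.edgeFinset.card : ℝ)) + 1) / ((G1.edgeFinset.card : ℝ)))) * ((((2 * ((G1.edgeFinset.card : ℝ))) * (2 * ((G1.edgeFinset.card : ℝ))) * (kemeny G1 M1) + 2 * ((G1.edgeFinset.card : ℝ)) * (acc G1 M1 v1)) + (2 * ((G1.edgeFinset.card : ℝ)) * (kemeny G1 M1) + 0))) + ((((G2.edgeFinset.card : ℝ)) + 1) / ((G1.edgeFinset.card : ℝ))) * ((2 * ((G1.edgeFinset.card : ℝ)) * (acc G1 M1 v1)) * (2 * ((G1.edgeFinset.card : ℝ)) + 1)) - ((((G2.edgeFinset.card : ℝ)) + 1) / ((G1.edgeFinset.card : ℝ))) * ((2 * ((G1.edgeFinset.card : ℝ)) * (acc G1 M1 v1)) * (2 * ((G1.edgeFinset.card : ℝ)) + 1))) + ((2 * ((G1.edgeFinset.card : ℝ)) * (acc G1 M1 v1)) * (2 * ((G2.edgeFinset.card : ℝ)) + 1) + (2 * ((G1.edgeFinset.card : ℝ)) + 1) * ((2 * ((G1.edgeFinset.card : ℝ)) + 1) * (2 * ((G2.edgeFinset.card : ℝ)) + 1)) + (2 * ((G1.edgeFinset.card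 : ℝ)) + 1) * ((1 + ((((G1.edgeFinset.card : ℝ)) + 1) / ((G2.edgeFinset.card : ℝ)))) * (2 * ((G2.edgeFinset.card : ℝ)) * (kemeny G2 M2)) + ((((G1.edgeFinset.card : ℝ)) + 1) / ((G2.edgeFinset.card : ℝ))) * (2 * ((G2.edgeFinset.card : ℝ)) * (acc G2 M2 v2)))) + (((2 * ((G2.edgeFinset.card : ℝ)) * (acc G2 M2 v2)) * (2 * ((G1.edgeFinset.card : ℝ)) + 1) + (2 * ((G2.edgeFinset.card : ℝ)) + 1) * ((2 * ((G2.edgeFinset.card : ℝ)) + 1) * (2 * ((G1.edgeFinset.card : ℝ)) + 1)) + (2 * ((G2.edgeFinset.card : ℝ)) + 1) * ((1 + ((((G2.edgeFinset.card : ℝ)) + 1) / ((G1.edgeFinset.card : ℝ)))) * (2 * ((G1.edgeFinset.card : ℝ)) * (kemeny G1 M1)) + ((((G2.edgeFinset.card : ℝ)) + 1) / ((G1.edgeFinset.card : ℝ))) * (2 * ((G1.edgeFinset.card : ℝ)) * (acc G1 M1 v1)))) + ((1 + ((((G1.edgeFinset.card : ℝ)) + 1) / ((G2.edgeFinset.card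 : ℝ)))) * ((((2 * ((G2.edgeFinset.card : ℝ))) * (2 * ((G2.edgeFinset.card : ℝ))) * (kemeny G2 M2) + 2 * ((G2.edgeFinset.card : ℝ)) * (acc G2 M2 v2)) + (2 * ((G2.edgeFinset.card : ℝ)) * (kemeny G2 M2) + 0))) + ((((G1.edgeFinset.card : ℝ)) + 1) / ((G2.edgeFinset.card : ℝ))) * ((2 * ((G2.edgeFinset.card : ℝ)) * (acc G2 M2 v2)) * (2 * ((G2.edgeFinset.card : ℝ)) + 1)) - ((((G1.edgeFinset.card : ℝ)) + 1) / ((G2.edgeFinset.card : ℝ))) * ((2 * ((G2.edgeFinset.card : ℝ)) * (acc G2 M2 v2)) * (2 * ((G2.edgeFinset.card : ℝ)) + 1)))) := by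
    simp only [Fintype.sum_sum_type]
    rw [Finset.sum_add_distrib, Finset.sum_add_distrib, hBll, hBlr, hBrl, hBrr]
  rw [hfull, hnum]
  push_cast
  exact final_identity _ _ _ _ _ _ (Nat.cast_nonneg _) (Nat.cast_nonneg _)
    (fun h => kemeny_zero (Nat.cast_eq_zero.1 h))
    (fun h => acc_zero (M := M1) (Nat.cast_eq_zero.1 h) v1)
    (fun h => kemeny_zero (Nat.cast_eq_zero.1 h))
    (fun h => acc_zero (M := M2) (Nat.cast_eq_zero.1 h) v2)
end
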